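/- arXiv:2006.03404 — 7 statements merged into one kernel-verified Lean document; each statement's English description precedes it below -/
import Mathlib

section
/- Fix λ2 > 0 and nonnegative random variables S_1, S_2, and suppose L_2(s) = O(L_1(s)) as s → ∞, i.e. there exist constants C > 0 and s_0 such that L_2(s) ≤ C·L_1(s) for all s ≥ s_0. Then the correlation coefficient CC(λ1, λ2) of the two stationary AoIs in the two-source M/G/1/1 pushout server tends to 0 as λ1 → ∞. -/
open MeasureTheory ProbabilityTheory Filter

/-- Laplace transform `L_S(s) = E[exp(−s·S)]` of a random variable `S`. -/
noncomputable def laplaceRV {Ω : Type*} [MeasurableSpace Ω] (P : Measure Ω)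
    (S : Ω → ℝ) (s : ℝ) : ℝ :=
  ∫ ω, Real.exp (-s * S ω) ∂P

/-- `M_S(s) = E[S·exp(−s·S)] = −L_S'(s)`. -/
noncomputable def mLaplaceRV {Ω : Type*} [MeasurableSpace Ω] (P : Measure Ω)
    (S : Ω → ℝ) (s : ℝ) : ℝ :=
  ∫ ω, S ω * Real.exp (-s * S ω) ∂P

-- Auxiliary lemmas
lemma t_mul_exp_neg_le (t : ℝ) : t * Real.exp (-t) ≤ Real.exp (-1) := by
  have h2 : t ≤ Real.exp (t - 1) := by linarith [Real.add_one_le_exp (t - 1)]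
  calc t * Real.exp (-t) ≤ Real.exp (t - 1) * Real.exp (-t) :=
        mul_le_mul_of_nonneg_right h2 (Real.exp_nonneg _)
    _ = Real.exp (-1) := by rw [← Real.exp_add]; ring_nf

lemma laplace_integrable {Ω : Type*} [MeasurableSpace Ω] (P : Measure Ω)
    [IsProbabilityMeasure P] (S : Ω → ℝ) (hm : Measurable S) (hn : ∀ ω, 0 ≤ S ω)
    (s : ℝ) (hs : 0 ≤ s) : Integrable (fun ω => Real.exp (-s * S ω)) P := by
  apply Integrable.mono' (integrable_const (1:ℝ))
  · exact ((hm.const_mul (-s)).exp).aestronglyMeasurable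
  · filter_upwards with ω
    rw [Real.norm_eq_abs, abs_of_nonneg (Real.exp_nonneg _), ← Real.exp_zero]
    exact Real.exp_le_exp.mpr (by nlinarith [hn ω])

lemma laplace_pos {Ω : Type*} [MeasurableSpace Ω] (P : Measure Ω)
    [IsProbabilityMeasure P] (S : Ω → ℝ) (hm : Measurable S) (hn : ∀ ω, 0 ≤ S ω)
    (s : ℝ) (hs : 0 ≤ s) : 0 < laplaceRV P S s := by
  rw [laplaceRV, integral_pos_iff_support_of_nonneg
    (fun ω => (Real.exp_pos _).le) (laplace_integrable P S hm hn s hs)]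
  have h : Function.support (fun ω => Real.exp (-s * S ω)) = Set.univ := by
    ext ω; simp [Function.support, (Real.exp_pos (-s * S ω)).ne']
  rw [h]; simp

lemma mlaplace_integrable {Ω : Type*} [MeasurableSpace Ω] (P : Measure Ω)
    [IsProbabilityMeasure P] (S : Ω → ℝ) (hm : Measurable S) (hn : ∀ ω, 0 ≤ S ω)
    (s : ℝ) (hs : 0 < s) : Integrable (fun ω => S ω * Real.exp (-s * S ω)) P := by
  apply Integrable.mono' (integrable_const (Real.exp (-1) / s))
  · exact (hm.mul ((hm.const_mul (-s)).exp)).aestronglyMeasurable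
  · filter_upwards with ω
    rw [Real.norm_eq_abs, abs_of_nonneg (mul_nonneg (hn ω) (Real.exp_nonneg _)),
      le_div_iff₀ hs]
    have := t_mul_exp_neg_le (s * S ω)
    have heq : -s * S ω = -(s * S ω) := by ring
    rw [heq]; nlinarith [Real.exp_nonneg (-(s * S ω))]

lemma mlaplace_nonneg {Ω : Type*} [MeasurableSpace Ω] (P : Measure Ω)
    (S : Ω → ℝ) (hn : ∀ ω, 0 ≤ S ω) (s : ℝ) : 0 ≤ mLaplaceRV P S s :=
  integral_nonneg fun ω => mul_nonneg (hn ω) (Real.exp_nonneg _)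

lemma mlaplace_le {Ω : Type*} [MeasurableSpace Ω] (P : Measure Ω)
    [IsProbabilityMeasure P] (S : Ω → ℝ) (hm : Measurable S) (hn : ∀ ω, 0 ≤ S ω)
    (s : ℝ) (hs : 0 < s) : mLaplaceRV P S s ≤ Real.exp (-1) / s := by
  have h := integral_mono (mlaplace_integrable P S hm hn s hs)
    (integrable_const (Real.exp (-1) / s)) (fun ω => ?_)
  · simpa [mLaplaceRV] using h
  · rw [le_div_iff₀ hs]
    have := t_mul_exp_neg_le (s * S ω)
    have heq : -s * S ω = -(s * S ω) := by ring
    rw [heq]; nlinarith [Real.exp_nonneg (-(s * S ω))]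

lemma laplace_le_one {Ω : Type*} [MeasurableSpace Ω] (P : Measure Ω)
    [IsProbabilityMeasure P] (S : Ω → ℝ) (hm : Measurable S) (hn : ∀ ω, 0 ≤ S ω)
    (s : ℝ) (hs : 0 ≤ s) : laplaceRV P S s ≤ 1 := by
  have h := integral_mono (laplace_integrable P S hm hn s hs)
    (integrable_const (1:ℝ)) (fun ω => ?_)
  · simpa [laplaceRV] using h
  · rw [← Real.exp_zero]; exact Real.exp_le_exp.mpr (by nlinarith [hn ω])

/-- Correlation coefficient of the two stationary AoIs in the two-source M/G/1/1
pushout server with arrival rates `l1, l2` and service-time variables `S1, S2`. -/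
noncomputable def aoiCC {Ω : Type*} [MeasurableSpace Ω] (P : Measure Ω)
    (S1 S2 : Ω → ℝ) (l1 l2 : ℝ) : ℝ :=
  -(l1 * l2 * (mLaplaceRV P S1 (l1 + l2) * laplaceRV P S2 (l1 + l2)
      + laplaceRV P S1 (l1 + l2) * mLaplaceRV P S2 (l1 + l2))) /
    ((l1 * laplaceRV P S1 (l1 + l2) + l2 * laplaceRV P S2 (l1 + l2)) *
      Real.sqrt ((1 - 2 * l1 * mLaplaceRV P S1 (l1 + l2)) *
        (1 - 2 * l2 * mLaplaceRV P S2 (l1 + l2))))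

set_option maxHeartbeats 1600000 in
/-- If `L_{S,2}(s) = O(L_{S,1}(s))` as `s → ∞`, then the correlation coefficient of the
two stationary AoIs tends to `0` as `λ1 → ∞`. -/
theorem aoiCC_tendsto_zero_lambda1_to_top {Ω : Type*} [MeasurableSpace Ω] (P : Measure Ω)
    [IsProbabilityMeasure P] (S1 S2 : Ω → ℝ) (hS1meas : Measurable S1)
    (hS2meas : Measurable S2) (hS1nn : ∀ ω, 0 ≤ S1 ω) (hS2nn : ∀ ω, 0 ≤ S2 ω)
    (lam2 : ℝ) (hlam2 : 0 < lam2)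
    (hO : ∃ C > (0 : ℝ), ∃ s0 : ℝ, ∀ s ≥ s0, laplaceRV P S2 s ≤ C * laplaceRV P S1 s) :
    Tendsto (fun lam1 : ℝ => aoiCC P S1 S2 lam1 lam2) atTop (nhds 0) := by
  obtain ⟨C, hC, s0, hs0⟩ := hO
  -- constants
  set e1 : ℝ := Real.exp (-1) with he1
  have he1pos : 0 < e1 := Real.exp_pos _
  have he1lt : e1 < 1/2 := by
    rw [he1, Real.exp_neg]
    rw [inv_lt_comm₀ (Real.exp_pos 1) (by norm_num)]
    calc (1/2 : ℝ)⁻¹ = 2 := by norm_num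
    _ < Real.exp 1 := by linarith [Real.exp_one_gt_d9]
  set c : ℝ := 1 - 2 * e1 with hc
  have hcpos : 0 < c := by simp [hc]; linarith
  set K : ℝ := lam2 * (C + 1) * e1 / c with hK
  have hKnn : 0 ≤ K := by positivity
  -- squeeze
  apply squeeze_zero_norm' (a := fun lam1 => K / (lam1 + lam2))
  · filter_upwards [eventually_ge_atTop (max s0 1)] with l1 hl1
    have hl1' : 1 ≤ l1 := le_trans (le_max_right _ _) hl1
    have hl1pos : 0 < l1 := by linarith
    set s : ℝ := l1 + lam2 with hsdef
    have hspos : 0 < s := by positivity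
    -- abbreviations
    set L1 := laplaceRV P S1 s with hL1def
    set L2 := laplaceRV P S2 s with hL2def
    set M1 := mLaplaceRV P S1 s with hM1def
    set M2 := mLaplaceRV P S2 s with hM2def
    have hL1pos : 0 < L1 := laplace_pos P S1 hS1meas hS1nn s hspos.le
    have hL2pos : 0 < L2 := laplace_pos P S2 hS2meas hS2nn s hspos.le
    have hM1nn : 0 ≤ M1 := mlaplace_nonneg P S1 hS1nn s
    have hM2nn : 0 ≤ M2 := mlaplace_nonneg P S2 hS2nn s
    have hM1le : M1 ≤ e1 / s := mlaplace_le P S1 hS1meas hS1nn s hspos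
    have hM2le : M2 ≤ e1 / s := mlaplace_le P S2 hS2meas hS2nn s hspos
    have hL2C : L2 ≤ C * L1 := hs0 s (le_trans (le_trans (le_max_left _ _) hl1) (by linarith))
    -- bounds for the sqrt factors
    have hb1 : c ≤ 1 - 2 * l1 * M1 := by
      have : l1 * M1 ≤ e1 := by
        calc l1 * M1 ≤ s * M1 := by nlinarith
        _ ≤ s * (e1 / s) := by nlinarith
        _ = e1 := by field_simp
      simp only [hc]; nlinarith
    have hb2 : c ≤ 1 - 2 * lam2 * M2 := by
      have : lam2 * M2 ≤ e1 := by
        calc lam2 * M2 ≤ s * M2 := by nlinarith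
        _ ≤ s * (e1 / s) := by nlinarith
        _ = e1 := by field_simp
      simp only [hc]; nlinarith
    have hsqrt : c ≤ Real.sqrt ((1 - 2 * l1 * M1) * (1 - 2 * lam2 * M2)) := by
      have h1 : c ^ 2 ≤ (1 - 2 * l1 * M1) * (1 - 2 * lam2 * M2) := by nlinarith
      calc c = Real.sqrt (c ^ 2) := (Real.sqrt_sq hcpos.le).symm
      _ ≤ _ := Real.sqrt_le_sqrt h1
    -- numerator and denominator
    set N : ℝ := l1 * lam2 * (M1 * L2 + L1 * M2) with hN
    set D : ℝ := (l1 * L1 + lam2 * L2) *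
      Real.sqrt ((1 - 2 * l1 * M1) * (1 - 2 * lam2 * M2)) with hD
    have hNnn : 0 ≤ N := by positivity
    have hDlb : l1 * L1 * c ≤ D := by
      have h1 : l1 * L1 ≤ l1 * L1 + lam2 * L2 := by nlinarith
      calc l1 * L1 * c ≤ (l1 * L1 + lam2 * L2) * c := by nlinarith
      _ ≤ D := by
        rw [hD]
        exact mul_le_mul_of_nonneg_left hsqrt (by positivity)
    have hDden : 0 < l1 * L1 * c := by positivity
    have hcc : aoiCC P S1 S2 l1 lam2 = -N / D := by
      rw [aoiCC]
    rw [hcc, norm_div, norm_neg, Real.norm_eq_abs, Real.norm_eq_abs,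
      abs_of_nonneg hNnn, abs_of_nonneg (by linarith : (0:ℝ) ≤ D)]
    -- chain
    have hNle : N ≤ l1 * lam2 * L1 * ((C + 1) * e1 / s) := by
      have h1 : M1 * L2 ≤ (e1 / s) * (C * L1) := by nlinarith
      have h2 : L1 * M2 ≤ L1 * (e1 / s) := by nlinarith
      have h3 : M1 * L2 + L1 * M2 ≤ L1 * ((C + 1) * e1 / s) := by
        have : (e1 / s) * (C * L1) + L1 * (e1 / s) = L1 * ((C + 1) * e1 / s) := by
          field_simp
        linarith
      calc N = l1 * lam2 * (M1 * L2 + L1 * M2) := hN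
      _ ≤ l1 * lam2 * (L1 * ((C + 1) * e1 / s)) :=
          mul_le_mul_of_nonneg_left h3 (by positivity)
      _ = l1 * lam2 * L1 * ((C + 1) * e1 / s) := by ring
    calc N / D ≤ N / (l1 * L1 * c) := by
          apply div_le_div_of_nonneg_left hNnn hDden hDlb
      _ ≤ (l1 * lam2 * L1 * ((C + 1) * e1 / s)) / (l1 * L1 * c) := by
          exact div_le_div_of_nonneg_right hNle hDden.le
      _ = K / s := by rw [hK]; field_simp
  · apply Tendsto.div_atTop (tendsto_const_nhds)
    exact tendsto_atTop_add_const_right _ _ tendsto_id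
end

section
/- Let λ1, λ2 > 0 with λ = λ1 + λ2, and let S be any nonnegative random variable with M(λ) = E[S·exp(−λ·S)]. Then −2·λ1·λ2·M(λ) / (λ · sqrt((1 − 2·λ1·M(λ))·(1 − 2·λ2·M(λ)))) ≥ −2·λ1·λ2 / (λ · sqrt((e·λ − 2·λ1)·(e·λ − 2·λ2))); that is, among all service-time distributions with the two sources sharing a common distribution and λ fixed, the correlation coefficient of the AoIs is minimized when the service times are deterministic and equal to 1/λ. -/
open MeasureTheory ProbabilityTheory Filter

/-- Pointwise bound: `x * exp (-l*x) ≤ 1/(e*l)` for `x ≥ 0`, `l > 0`. -/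
lemma aoi_pointwise_bound (l x : ℝ) (hl : 0 < l) (hx : 0 ≤ x) :
    x * Real.exp (-l * x) ≤ 1 / (Real.exp 1 * l) := by
  have h : l * x ≤ Real.exp (l * x - 1) := by
    have := Real.add_one_le_exp (l * x - 1); linarith
  have hp : 0 < Real.exp (-(l * x)) := Real.exp_pos _
  have key : l * x * Real.exp (-(l * x)) ≤ Real.exp (-1 : ℝ) := by
    calc l * x * Real.exp (-(l * x))
        ≤ Real.exp (l * x - 1) * Real.exp (-(l * x)) :=
          mul_le_mul_of_nonneg_right h hp.le
      _ = Real.exp (-1 : ℝ) := by rw [← Real.exp_add]; ring_nf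
  have hne : -l * x = -(l * x) := neg_mul l x
  have hxe : x * Real.exp (-l * x) = l * x * Real.exp (-(l * x)) / l := by
    rw [hne]; field_simp
  have hrhs : 1 / (Real.exp 1 * l) = Real.exp (-1 : ℝ) / l := by
    rw [Real.exp_neg]; field_simp
  rw [hxe, hrhs]
  gcongr

/-- The core polynomial inequality. -/
lemma aoi_core (E l1 l2 M : ℝ) (hE : 2 < E) (h1 : 0 < l1) (h2 : 0 < l2)
    (hM0 : 0 ≤ M) (hEM : E * (l1 + l2) * M ≤ 1) :
    M ^ 2 * ((E * (l1 + l2) - 2 * l1) * (E * (l1 + l2) - 2 * l2)) ≤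
      (1 - 2 * l1 * M) * (1 - 2 * l2 * M) := by
  have hnn : (0:ℝ) ≤ 1 + (E - 2) * (l1 + l2) * M := by
    have : 0 ≤ (E - 2) * (l1 + l2) * M :=
      mul_nonneg (mul_nonneg (by linarith) (by linarith)) hM0
    linarith
  nlinarith [mul_nonneg (sub_nonneg.2 hEM) hnn]

/-- The key real inequality. -/
lemma aoi_key (lam1 lam2 M : ℝ) (h1 : 0 < lam1) (h2 : 0 < lam2)
    (hM0 : 0 ≤ M) (hM : M ≤ 1 / (Real.exp 1 * (lam1 + lam2))) :
    -(2 * lam1 * lam2) / ((lam1 + lam2) *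
        Real.sqrt ((Real.exp 1 * (lam1 + lam2) - 2 * lam1) *
          (Real.exp 1 * (lam1 + lam2) - 2 * lam2))) ≤
      -(2 * lam1 * lam2 * M) / ((lam1 + lam2) *
          Real.sqrt ((1 - 2 * lam1 * M) * (1 - 2 * lam2 * M))) := by
  have hE2 : 2 < Real.exp 1 := by
    have := Real.exp_one_gt_d9; linarith
  set E := Real.exp 1 with hE
  have hlam : 0 < lam1 + lam2 := by positivity
  have hEM : E * (lam1 + lam2) * M ≤ 1 := by
    have h := (le_div_iff₀ (by positivity : (0:ℝ) < E * (lam1 + lam2))).mp hM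
    nlinarith
  have hA01 : 0 < E * (lam1 + lam2) - 2 * lam1 := by nlinarith
  have hA02 : 0 < E * (lam1 + lam2) - 2 * lam2 := by nlinarith
  have hA1 : 0 < 1 - 2 * lam1 * M := by nlinarith
  have hA2 : 0 < 1 - 2 * lam2 * M := by nlinarith
  have hA0pos : 0 < (E * (lam1 + lam2) - 2 * lam1) * (E * (lam1 + lam2) - 2 * lam2) :=
    mul_pos hA01 hA02
  have hApos : 0 < (1 - 2 * lam1 * M) * (1 - 2 * lam2 * M) := mul_pos hA1 hA2
  have hcore := aoi_core E lam1 lam2 M hE2 h1 h2 hM0 hEM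
  have hsA0 : 0 < Real.sqrt ((E * (lam1 + lam2) - 2 * lam1) * (E * (lam1 + lam2) - 2 * lam2)) :=
    Real.sqrt_pos.2 hA0pos
  have hsA : 0 < Real.sqrt ((1 - 2 * lam1 * M) * (1 - 2 * lam2 * M)) :=
    Real.sqrt_pos.2 hApos
  have hMsqrt : M * Real.sqrt ((E * (lam1 + lam2) - 2 * lam1) * (E * (lam1 + lam2) - 2 * lam2))
      ≤ Real.sqrt ((1 - 2 * lam1 * M) * (1 - 2 * lam2 * M)) := by
    have h := Real.sqrt_le_sqrt hcore
    rwa [Real.sqrt_mul (sq_nonneg M), Real.sqrt_sq hM0] at h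
  rw [neg_div, neg_div, neg_le_neg_iff, div_le_div_iff₀ (by positivity) (by positivity)]
  have hc : 0 ≤ 2 * lam1 * lam2 * (lam1 + lam2) := by positivity
  calc 2 * lam1 * lam2 * M * ((lam1 + lam2) *
        Real.sqrt ((E * (lam1 + lam2) - 2 * lam1) * (E * (lam1 + lam2) - 2 * lam2)))
      = (2 * lam1 * lam2 * (lam1 + lam2)) *
          (M * Real.sqrt ((E * (lam1 + lam2) - 2 * lam1) * (E * (lam1 + lam2) - 2 * lam2))) := by
        ring
    _ ≤ (2 * lam1 * lam2 * (lam1 + lam2)) *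
          Real.sqrt ((1 - 2 * lam1 * M) * (1 - 2 * lam2 * M)) :=
        mul_le_mul_of_nonneg_left hMsqrt hc
    _ = 2 * lam1 * lam2 * ((lam1 + lam2) *
          Real.sqrt ((1 - 2 * lam1 * M) * (1 - 2 * lam2 * M))) := by ring

/-- With a common service-time distribution for both sources and `λ = λ1 + λ2` fixed,
the AoI correlation coefficient is minimized by the deterministic service time `1/λ`:
`−2·λ1·λ2·M(λ)/(λ·sqrt((1−2·λ1·M(λ))·(1−2·λ2·M(λ))))
  ≥ −2·λ1·λ2/(λ·sqrt((e·λ−2·λ1)·(e·λ−2·λ2)))`,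
where `M(λ) = E[S·exp(−λ·S)]`. -/
theorem aoiCC_common_service_ge_deterministic {Ω : Type*} [MeasurableSpace Ω]
    (P : Measure Ω) [IsProbabilityMeasure P] (S : Ω → ℝ) (hSmeas : Measurable S)
    (hSnn : ∀ ω, 0 ≤ S ω) (lam1 lam2 : ℝ) (hlam1 : 0 < lam1) (hlam2 : 0 < lam2) :
    -(2 * lam1 * lam2) / ((lam1 + lam2) *
        Real.sqrt ((Real.exp 1 * (lam1 + lam2) - 2 * lam1) *
          (Real.exp 1 * (lam1 + lam2) - 2 * lam2))) ≤
      -(2 * lam1 * lam2 * ∫ ω, S ω * Real.exp (-(lam1 + lam2) * S ω) ∂P) /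
        ((lam1 + lam2) *
          Real.sqrt ((1 - 2 * lam1 * ∫ ω, S ω * Real.exp (-(lam1 + lam2) * S ω) ∂P) *
            (1 - 2 * lam2 * ∫ ω, S ω * Real.exp (-(lam1 + lam2) * S ω) ∂P))) := by
  have hlam : 0 < lam1 + lam2 := by positivity
  have hbd : ∀ ω, S ω * Real.exp (-(lam1 + lam2) * S ω) ≤ 1 / (Real.exp 1 * (lam1 + lam2)) :=
    fun ω => aoi_pointwise_bound (lam1 + lam2) (S ω) hlam (hSnn ω)
  have hnn : ∀ ω, 0 ≤ S ω * Real.exp (-(lam1 + lam2) * S ω) :=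
    fun ω => mul_nonneg (hSnn ω) (Real.exp_pos _).le
  have hmeas : Measurable fun ω => S ω * Real.exp (-(lam1 + lam2) * S ω) :=
    hSmeas.mul ((Real.measurable_exp).comp ((measurable_const.mul hSmeas)))
  have hInt : Integrable (fun ω => S ω * Real.exp (-(lam1 + lam2) * S ω)) P := by
    apply Integrable.mono' (integrable_const (1 / (Real.exp 1 * (lam1 + lam2))))
      hmeas.aestronglyMeasurable
    filter_upwards with ω
    rw [Real.norm_eq_abs, abs_of_nonneg (hnn ω)]
    exact hbd ω
  have hM0 : 0 ≤ ∫ ω, S ω * Real.exp (-(lam1 + lam2) * S ω) ∂P := integral_nonneg hnn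
  have hM : (∫ ω, S ω * Real.exp (-(lam1 + lam2) * S ω) ∂P)
      ≤ 1 / (Real.exp 1 * (lam1 + lam2)) := by
    calc (∫ ω, S ω * Real.exp (-(lam1 + lam2) * S ω) ∂P)
        ≤ ∫ _ω, 1 / (Real.exp 1 * (lam1 + lam2)) ∂P :=
          integral_mono hInt (integrable_const _) hbd
      _ = 1 / (Real.exp 1 * (lam1 + lam2)) := by simp
  exact aoi_key lam1 lam2 _ hlam1 hlam2 hM0 hM
end

section
/- Let λ1, λ2 > 0 and λ = λ1 + λ2. Then (λ/(2·λ1·λ2)) · sqrt((e·λ − 2·λ1)·(e·λ − 2·λ2)) ≥ 2·(e − 1), or equivalently −2·λ1·λ2/(λ·sqrt((e·λ − 2·λ1)·(e·λ − 2·λ2))) ≥ −1/(2·(e − 1)), and equality holds if and only if λ1 = λ2 = λ/2. (Note e·λ − 2·λ_k > 0 automatically since 2·λ_k < 2·λ ≤ e·λ.) -/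
open Real

/-- For `λ1, λ2 > 0` with `λ = λ1 + λ2`:
`(λ/(2·λ1·λ2))·sqrt((e·λ−2·λ1)·(e·λ−2·λ2)) ≥ 2·(e−1)`, equivalently
`−2·λ1·λ2/(λ·sqrt((e·λ−2·λ1)·(e·λ−2·λ2))) ≥ −1/(2·(e−1))`,
with equality if and only if `λ1 = λ2 = λ/2`. -/
theorem deterministic_cc_lower_bound (lam1 lam2 : ℝ) (hlam1 : 0 < lam1)
    (hlam2 : 0 < lam2) :
    (2 * (Real.exp 1 - 1) ≤ ((lam1 + lam2) / (2 * lam1 * lam2)) *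
        Real.sqrt ((Real.exp 1 * (lam1 + lam2) - 2 * lam1) *
          (Real.exp 1 * (lam1 + lam2) - 2 * lam2))) ∧
    (-(1 / (2 * (Real.exp 1 - 1))) ≤ -(2 * lam1 * lam2) / ((lam1 + lam2) *
        Real.sqrt ((Real.exp 1 * (lam1 + lam2) - 2 * lam1) *
          (Real.exp 1 * (lam1 + lam2) - 2 * lam2)))) ∧
    (((lam1 + lam2) / (2 * lam1 * lam2)) *
        Real.sqrt ((Real.exp 1 * (lam1 + lam2) - 2 * lam1) *
          (Real.exp 1 * (lam1 + lam2) - 2 * lam2)) = 2 * (Real.exp 1 - 1) ↔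
      lam1 = lam2 ∧ lam1 = (lam1 + lam2) / 2) := by
  have hE : (2:ℝ) < Real.exp 1 := by
    have := Real.exp_one_gt_d9; norm_num at this ⊢; linarith
  set E := Real.exp 1 with hEdef
  have hA1 : 0 < E * (lam1 + lam2) - 2 * lam1 := by nlinarith
  have hA2 : 0 < E * (lam1 + lam2) - 2 * lam2 := by nlinarith
  have hApos : 0 < (E * (lam1 + lam2) - 2 * lam1) * (E * (lam1 + lam2) - 2 * lam2) :=
    mul_pos hA1 hA2
  set A := (E * (lam1 + lam2) - 2 * lam1) * (E * (lam1 + lam2) - 2 * lam2) with hAdef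
  have hsqrtpos : 0 < Real.sqrt A := Real.sqrt_pos.mpr hApos
  have hsq : Real.sqrt A * Real.sqrt A = A := Real.mul_self_sqrt hApos.le
  have hspos : 0 < lam1 + lam2 := by linarith
  have hppos : 0 < lam1 * lam2 := mul_pos hlam1 hlam2
  have bracket : 0 < E * (E - 2) * ((lam1 + lam2) ^ 2 + 4 * (lam1 * lam2)) + 4 * (lam1 * lam2) := by
    have h1 : 0 < E * (E - 2) := mul_pos (by linarith) (by linarith)
    have h2 : 0 < (lam1 + lam2) ^ 2 + 4 * (lam1 * lam2) := by positivity
    nlinarith [mul_pos h1 h2]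
  have keypoly : (4 * (E - 1) * (lam1 * lam2)) ^ 2 ≤ (lam1 + lam2) ^ 2 * A := by
    have h0 : 0 ≤ (lam1 - lam2) ^ 2 *
        (E * (E - 2) * ((lam1 + lam2) ^ 2 + 4 * (lam1 * lam2)) + 4 * (lam1 * lam2)) :=
      mul_nonneg (sq_nonneg _) bracket.le
    rw [hAdef]; nlinarith [h0]
  have key : 4 * (E - 1) * (lam1 * lam2) ≤ (lam1 + lam2) * Real.sqrt A := by
    nlinarith [keypoly, hsq, hsqrtpos, hspos, mul_pos hspos hsqrtpos,
      sq_nonneg ((lam1 + lam2) * Real.sqrt A - 4 * (E - 1) * (lam1 * lam2)),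
      sq_nonneg ((lam1 + lam2) * Real.sqrt A + 4 * (E - 1) * (lam1 * lam2))]
  have first : 2 * (E - 1) ≤ ((lam1 + lam2) / (2 * lam1 * lam2)) * Real.sqrt A := by
    rw [div_mul_eq_mul_div, le_div_iff₀ (by positivity)]
    nlinarith [key]
  refine ⟨first, ?_, ?_, ?_⟩
  · rw [neg_div, neg_le_neg_iff, div_le_div_iff₀ (mul_pos hspos hsqrtpos) (by linarith)]
    nlinarith [key]
  · intro h
    have hmul : (lam1 + lam2) * Real.sqrt A = 4 * (E - 1) * (lam1 * lam2) := by
      rw [div_mul_eq_mul_div] at h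
      field_simp at h
      linarith
    have hsqA : (lam1 + lam2) ^ 2 * A = (4 * (E - 1) * (lam1 * lam2)) ^ 2 := by
      have h2 : ((lam1 + lam2) * Real.sqrt A) ^ 2 = (4 * (E - 1) * (lam1 * lam2)) ^ 2 := by
        rw [hmul]
      calc (lam1 + lam2) ^ 2 * A = ((lam1 + lam2) * Real.sqrt A) ^ 2 := by
            rw [mul_pow, Real.sq_sqrt hApos.le]
          _ = (4 * (E - 1) * (lam1 * lam2)) ^ 2 := h2
    have h0 : (lam1 - lam2) ^ 2 *
        (E * (E - 2) * ((lam1 + lam2) ^ 2 + 4 * (lam1 * lam2)) + 4 * (lam1 * lam2)) = 0 := by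
      rw [hAdef] at hsqA; linear_combination hsqA
    have h12 : lam1 = lam2 := by
      have := mul_eq_zero.mp h0
      rcases this with h | h
      · have : lam1 - lam2 = 0 := by
          exact pow_eq_zero_iff (n := 2) (by norm_num) |>.mp h
        linarith
      · linarith
    exact ⟨h12, by linarith⟩
  · rintro ⟨h12, -⟩
    subst h12
    have hAval : A = (2 * lam1 * (E - 1)) ^ 2 := by rw [hAdef]; ring
    rw [hAval, Real.sqrt_sq (by nlinarith)]
    field_simp
    ring
end

section
/- Let λ1, λ2 > 0 with λ = λ1 + λ2, and let S be any nonnegative random variable with M(λ) = E[S·exp(−λ·S)]. Then CC_S(λ1, λ2) = −2·λ1·λ2·M(λ) / (λ · sqrt((1 − 2·λ1·M(λ))·(1 − 2·λ2·M(λ)))) ≥ −1/(2·(e − 1)) ≈ −0.290988, and equality holds if and only if λ1 = λ2 = λ/2 and S = 1/λ almost surely. -/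
open MeasureTheory ProbabilityTheory Filter

private lemma exp_bound (y : ℝ) : y * Real.exp (-y) ≤ Real.exp (-1) ∧
    (y * Real.exp (-y) = Real.exp (-1) ↔ y = 1) := by
  have h := Real.add_one_le_exp (y - 1)
  have hexp : (0:ℝ) < Real.exp (-y) := Real.exp_pos _
  have key : y * Real.exp (-y) ≤ Real.exp (y - 1) * Real.exp (-y) :=
    mul_le_mul_of_nonneg_right (by linarith) hexp.le
  rw [← Real.exp_add] at key
  have he : y - 1 + -y = -1 := by ring
  rw [he] at key
  refine ⟨key, ?_, ?_⟩
  · intro heq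
    by_contra hne
    have h' := Real.add_one_lt_exp (x := y - 1) (by intro h0; exact hne (by linarith))
    have hlt : y * Real.exp (-y) < Real.exp (y - 1) * Real.exp (-y) :=
      mul_lt_mul_of_pos_right (by linarith) hexp
    rw [← Real.exp_add, he] at hlt
    linarith
  · intro h1; subst h1; norm_num

private lemma pt_bound (lam : ℝ) (hlp : 0 < lam) (x : ℝ) :
    x * Real.exp (-lam * x) ≤ (Real.exp 1)⁻¹ / lam ∧
    (x * Real.exp (-lam * x) = (Real.exp 1)⁻¹ / lam ↔ x = 1 / lam) := by
  obtain ⟨hb, hbiff⟩ := exp_bound (lam * x)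
  have harg : -(lam * x) = -lam * x := by ring
  have hEinv : Real.exp (-1) = (Real.exp 1)⁻¹ := Real.exp_neg 1
  rw [← harg]
  constructor
  · rw [le_div_iff₀ hlp, ← hEinv]
    have h1 : x * Real.exp (-(lam * x)) * lam = lam * x * Real.exp (-(lam * x)) := by
      ring
    rw [h1]; exact hb
  · rw [eq_div_iff hlp.ne', ← hEinv]
    have h1 : x * Real.exp (-(lam * x)) * lam = lam * x * Real.exp (-(lam * x)) := by
      ring
    rw [h1, hbiff, eq_div_iff hlp.ne']
    constructor
    · intro h; linear_combination h
    · intro h; linear_combination h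

private lemma sq_ineq (l1 l2 m E : ℝ) (h1 : 0 < l1) (h2 : 0 < l2) (hm : 0 ≤ m)
    (hE : 2 < E) (ht : E * ((l1 + l2) * m) ≤ 1) :
    16 * (E-1)^2 * l1^2 * l2^2 * m^2 ≤ (l1+l2)^2 * ((1 - 2*l1*m) * (1 - 2*l2*m)) ∧
    (16 * (E-1)^2 * l1^2 * l2^2 * m^2 = (l1+l2)^2 * ((1 - 2*l1*m) * (1 - 2*l2*m)) ↔
      l1 = l2 ∧ E * ((l1 + l2) * m) = 1) := by
  have hlp : 0 < l1 + l2 := by linarith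
  have hs0 : 0 ≤ (l1 + l2) * m := mul_nonneg hlp.le hm
  have hE2s : 0 ≤ (E - 2) * ((l1 + l2) * m) := mul_nonneg (by linarith) hs0
  have h1s : 0 < 1 - 2 * ((l1 + l2) * m) := by nlinarith
  have h1Es : 0 ≤ 1 - E * ((l1 + l2) * m) := by linarith
  have hfpos : 0 < (E - 2) * ((l1 + l2) * m) + 1 := by linarith
  have hBpos : 0 < (l1+l2)^2 * (1 - 2*((l1+l2)*m)) := mul_pos (by positivity) h1s
  have hT1n : 0 ≤ (l1-l2)^2/4 * ((l1+l2)^2 * (1 - 2*((l1+l2)*m))) :=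
    mul_nonneg (by positivity) hBpos.le
  have hT2n : 0 ≤ l1*l2 * ((l1+l2)^2 *
      ((1 - E*((l1+l2)*m)) * ((E-2)*((l1+l2)*m) + 1))) := by
    apply mul_nonneg (by positivity)
    exact mul_nonneg (by positivity) (mul_nonneg h1Es hfpos.le)
  have hT3n : 0 ≤ 16*(E-1)^2*m^2 * ((l1+l2)^2/4) * (l1*l2*(l1-l2)^2/4) := by positivity
  have hid : (l1+l2)^2/4 *
      ((l1+l2)^2 * ((1 - 2*l1*m) * (1 - 2*l2*m)) - 16*(E-1)^2*l1^2*l2^2*m^2)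
      = (l1-l2)^2/4 * ((l1+l2)^2 * (1 - 2*((l1+l2)*m)))
        + l1*l2 * ((l1+l2)^2 * ((1 - E*((l1+l2)*m)) * ((E-2)*((l1+l2)*m) + 1)))
        + 16*(E-1)^2*m^2 * ((l1+l2)^2/4) * (l1*l2*(l1-l2)^2/4) := by ring
  have hU : (0:ℝ) < (l1+l2)^2/4 := by positivity
  have hmain : 0 ≤ (l1+l2)^2 * ((1 - 2*l1*m) * (1 - 2*l2*m))
      - 16*(E-1)^2*l1^2*l2^2*m^2 := by
    have h0 : (l1+l2)^2/4 * 0 ≤ (l1+l2)^2/4 *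
        ((l1+l2)^2 * ((1 - 2*l1*m) * (1 - 2*l2*m)) - 16*(E-1)^2*l1^2*l2^2*m^2) := by
      rw [mul_zero, hid]; linarith
    exact le_of_mul_le_mul_left h0 hU
  refine ⟨by linarith, ?_, ?_⟩
  · intro heq
    have hsum : (l1-l2)^2/4 * ((l1+l2)^2 * (1 - 2*((l1+l2)*m)))
        + l1*l2 * ((l1+l2)^2 * ((1 - E*((l1+l2)*m)) * ((E-2)*((l1+l2)*m) + 1)))
        + 16*(E-1)^2*m^2 * ((l1+l2)^2/4) * (l1*l2*(l1-l2)^2/4) = 0 := by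
      rw [← hid, heq]; ring
    have hT1z : (l1-l2)^2/4 * ((l1+l2)^2 * (1 - 2*((l1+l2)*m))) = 0 := by linarith
    have hT2z : l1*l2 * ((l1+l2)^2 *
        ((1 - E*((l1+l2)*m)) * ((E-2)*((l1+l2)*m) + 1))) = 0 := by linarith
    constructor
    · rcases mul_eq_zero.mp hT1z with h | h
      · have hz : (l1 - l2)^2 = 0 := by linarith
        have hz2 := pow_eq_zero_iff (n := 2) (by norm_num) |>.mp hz
        linarith [sub_eq_zero.mp hz2]
      · exact absurd h hBpos.ne'
    · rcases mul_eq_zero.mp hT2z with h | h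
      · exact absurd h (by positivity)
      · rcases mul_eq_zero.mp h with h' | h'
        · exact absurd h' (by positivity)
        · rcases mul_eq_zero.mp h' with h'' | h''
          · linarith
          · exact absurd h'' hfpos.ne'
  · rintro ⟨hl, hEs⟩
    subst hl
    have hz : 1 - E * ((l1 + l1) * m) = 0 := by linarith
    have hsum : (l1-l1)^2/4 * ((l1+l1)^2 * (1 - 2*((l1+l1)*m)))
        + l1*l1 * ((l1+l1)^2 * ((1 - E*((l1+l1)*m)) * ((E-2)*((l1+l1)*m) + 1)))
        + 16*(E-1)^2*m^2 * ((l1+l1)^2/4) * (l1*l1*(l1-l1)^2/4) = 0 := by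
      rw [hz]; ring
    have hzz : (l1+l1)^2/4 *
        ((l1+l1)^2 * ((1 - 2*l1*m) * (1 - 2*l1*m)) - 16*(E-1)^2*l1^2*l1^2*m^2) = 0 := by
      rw [hid, hsum]
    have := (mul_eq_zero.mp hzz).resolve_left (by positivity)
    linarith

private lemma cc_ineq (l1 l2 m E : ℝ) (h1 : 0 < l1) (h2 : 0 < l2) (hm : 0 ≤ m)
    (hE : 2 < E) (ht : (l1 + l2) * m ≤ E⁻¹) :
    (-(1 / (2 * (E - 1))) ≤
      -(2 * l1 * l2 * m) / ((l1 + l2) * Real.sqrt ((1 - 2*l1*m) * (1 - 2*l2*m)))) ∧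
    (-(2 * l1 * l2 * m) / ((l1 + l2) * Real.sqrt ((1 - 2*l1*m) * (1 - 2*l2*m))) =
        -(1 / (2 * (E - 1))) ↔ l1 = l2 ∧ E * ((l1 + l2) * m) = 1) := by
  have hlp : 0 < l1 + l2 := by linarith
  have hEpos : (0:ℝ) < E := by linarith
  have ht' : E * ((l1 + l2) * m) ≤ 1 := by
    calc E * ((l1+l2)*m) ≤ E * E⁻¹ := mul_le_mul_of_nonneg_left ht hEpos.le
      _ = 1 := mul_inv_cancel₀ hEpos.ne'
  have hs0 : 0 ≤ (l1 + l2) * m := mul_nonneg hlp.le hm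
  have h1s : 0 < 1 - 2 * ((l1 + l2) * m) := by nlinarith
  have hd1 : 0 < 1 - 2 * l1 * m := by nlinarith
  have hd2 : 0 < 1 - 2 * l2 * m := by nlinarith
  have hD : 0 < (1 - 2*l1*m) * (1 - 2*l2*m) := mul_pos hd1 hd2
  have hsD : 0 < Real.sqrt ((1 - 2*l1*m) * (1 - 2*l2*m)) := Real.sqrt_pos.mpr hD
  have hR : 0 < (l1 + l2) * Real.sqrt ((1 - 2*l1*m) * (1 - 2*l2*m)) := mul_pos hlp hsD
  have hc : (0:ℝ) < 2 * (E - 1) := by linarith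
  have hRe : (l1 + l2) * Real.sqrt ((1 - 2*l1*m) * (1 - 2*l2*m)) =
      Real.sqrt ((l1+l2)^2 * ((1 - 2*l1*m) * (1 - 2*l2*m))) := by
    rw [Real.sqrt_mul (sq_nonneg (l1+l2)) ((1 - 2*l1*m) * (1 - 2*l2*m)),
      Real.sqrt_sq hlp.le]
  have ha : (0:ℝ) ≤ 2 * l1 * l2 * m * (2 * (E-1)) := by positivity
  obtain ⟨hle, hiff⟩ := sq_ineq l1 l2 m E h1 h2 hm hE ht'
  have hsq : (2 * l1 * l2 * m * (2 * (E-1)))^2 = 16 * (E-1)^2 * l1^2 * l2^2 * m^2 := by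
    ring
  have hkey : (2 * l1 * l2 * m * (2 * (E-1)) =
      Real.sqrt ((l1+l2)^2 * ((1 - 2*l1*m) * (1 - 2*l2*m)))) ↔
      (l1 = l2 ∧ E * ((l1 + l2) * m) = 1) := by
    rw [← hiff, ← hsq]
    constructor
    · intro h; rw [h, Real.sq_sqrt (by positivity)]
    · intro h; rw [← h, Real.sqrt_sq ha]
  constructor
  · rw [neg_div, neg_le_neg_iff, div_le_div_iff₀ hR hc, one_mul, hRe]
    calc 2 * l1 * l2 * m * (2 * (E-1))
        = Real.sqrt ((2 * l1 * l2 * m * (2 * (E-1)))^2) := (Real.sqrt_sq ha).symm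
      _ ≤ Real.sqrt ((l1+l2)^2 * ((1 - 2*l1*m) * (1 - 2*l2*m))) :=
          Real.sqrt_le_sqrt (by rw [hsq]; exact hle)
  · rw [neg_div, neg_inj, div_eq_div_iff hR.ne' hc.ne', one_mul, hRe]
    exact hkey

/-- With a common service-time distribution `S` and `λ = λ1 + λ2`, the AoI correlation
coefficient `CC_S(λ1,λ2) = −2·λ1·λ2·M(λ)/(λ·sqrt((1−2·λ1·M(λ))·(1−2·λ2·M(λ))))`
satisfies `CC_S(λ1,λ2) ≥ −1/(2·(e−1))`, with equality if and only if
`λ1 = λ2 = λ/2` and `S = 1/λ` almost surely, where `M(λ) = E[S·exp(−λ·S)]`. -/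
theorem aoiCC_common_service_lower_bound {Ω : Type*} [MeasurableSpace Ω]
    (P : Measure Ω) [IsProbabilityMeasure P] (S : Ω → ℝ) (hSmeas : Measurable S)
    (hSnn : ∀ ω, 0 ≤ S ω) (lam1 lam2 : ℝ) (hlam1 : 0 < lam1) (hlam2 : 0 < lam2) :
    (-(1 / (2 * (Real.exp 1 - 1))) ≤
      -(2 * lam1 * lam2 * ∫ ω, S ω * Real.exp (-(lam1 + lam2) * S ω) ∂P) /
        ((lam1 + lam2) *
          Real.sqrt ((1 - 2 * lam1 * ∫ ω, S ω * Real.exp (-(lam1 + lam2) * S ω) ∂P) *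
            (1 - 2 * lam2 * ∫ ω, S ω * Real.exp (-(lam1 + lam2) * S ω) ∂P)))) ∧
    (-(2 * lam1 * lam2 * ∫ ω, S ω * Real.exp (-(lam1 + lam2) * S ω) ∂P) /
        ((lam1 + lam2) *
          Real.sqrt ((1 - 2 * lam1 * ∫ ω, S ω * Real.exp (-(lam1 + lam2) * S ω) ∂P) *
            (1 - 2 * lam2 * ∫ ω, S ω * Real.exp (-(lam1 + lam2) * S ω) ∂P))) =
        -(1 / (2 * (Real.exp 1 - 1))) ↔
      (lam1 = lam2 ∧ lam1 = (lam1 + lam2) / 2 ∧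
        ∀ᵐ ω ∂P, S ω = 1 / (lam1 + lam2))) := by
  have hlp : 0 < lam1 + lam2 := by linarith
  have hE : (2:ℝ) < Real.exp 1 := by
    have := Real.exp_one_gt_d9; linarith
  have hEpos : (0:ℝ) < Real.exp 1 := by linarith
  have hfb := fun ω => pt_bound (lam1 + lam2) hlp (S ω)
  have hfnn : ∀ ω, 0 ≤ S ω * Real.exp (-(lam1 + lam2) * S ω) :=
    fun ω => mul_nonneg (hSnn ω) (Real.exp_pos _).le
  have hfmeas : Measurable (fun ω => S ω * Real.exp (-(lam1 + lam2) * S ω)) := by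
    apply hSmeas.mul
    exact Real.measurable_exp.comp ((measurable_const (a := -(lam1+lam2))).mul hSmeas)
  have hfint : Integrable (fun ω => S ω * Real.exp (-(lam1 + lam2) * S ω)) P := by
    refine ⟨hfmeas.aestronglyMeasurable, ?_⟩
    apply MeasureTheory.HasFiniteIntegral.of_bounded
      (C := (Real.exp 1)⁻¹ / (lam1 + lam2))
    filter_upwards with ω
    rw [Real.norm_eq_abs, abs_of_nonneg (hfnn ω)]
    exact (hfb ω).1
  set I : ℝ := ∫ ω, S ω * Real.exp (-(lam1 + lam2) * S ω) ∂P with hIdef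
  have hm0 : 0 ≤ I := integral_nonneg hfnn
  have hmub : I ≤ (Real.exp 1)⁻¹ / (lam1 + lam2) := by
    rw [hIdef]
    calc (∫ ω, S ω * Real.exp (-(lam1 + lam2) * S ω) ∂P)
        ≤ ∫ _, (Real.exp 1)⁻¹ / (lam1 + lam2) ∂P :=
          integral_mono hfint (integrable_const _) (fun ω => (hfb ω).1)
      _ = (Real.exp 1)⁻¹ / (lam1 + lam2) := by simp
  have ht : (lam1 + lam2) * I ≤ (Real.exp 1)⁻¹ := by
    rw [mul_comm]
    exact (le_div_iff₀ hlp).mp hmub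
  have hmeq : (Real.exp 1 * ((lam1 + lam2) * I) = 1) ↔
      (∀ᵐ ω ∂P, S ω = 1 / (lam1 + lam2)) := by
    have hme : (Real.exp 1 * ((lam1 + lam2) * I) = 1) ↔
        I = (Real.exp 1)⁻¹ / (lam1 + lam2) := by
      rw [eq_div_iff hlp.ne', inv_eq_one_div, eq_div_iff hEpos.ne']
      constructor
      · intro h; linear_combination h
      · intro h; linear_combination h
    rw [hme]
    constructor
    · intro h
      have hg : ∀ ω, 0 ≤ (Real.exp 1)⁻¹ / (lam1 + lam2)
          - S ω * Real.exp (-(lam1 + lam2) * S ω) :=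
        fun ω => by linarith [(hfb ω).1]
      have hgint : Integrable (fun ω => (Real.exp 1)⁻¹ / (lam1 + lam2)
          - S ω * Real.exp (-(lam1 + lam2) * S ω)) P :=
        (integrable_const _).sub hfint
      have hgz : (∫ ω, ((Real.exp 1)⁻¹ / (lam1 + lam2)
          - S ω * Real.exp (-(lam1 + lam2) * S ω)) ∂P) = 0 := by
        rw [integral_sub (integrable_const _) hfint]
        rw [← hIdef, h]
        simp
      have hae := (integral_eq_zero_iff_of_nonneg hg hgint).mp hgz
      filter_upwards [hae] with ω hω
      have hfω : S ω * Real.exp (-(lam1 + lam2) * S ω)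
          = (Real.exp 1)⁻¹ / (lam1 + lam2) := by
        have h0 : (Real.exp 1)⁻¹ / (lam1 + lam2)
            - S ω * Real.exp (-(lam1 + lam2) * S ω) = 0 := hω
        linarith
      exact (hfb ω).2.mp hfω
    · intro h
      have hcongr : (fun ω => S ω * Real.exp (-(lam1 + lam2) * S ω)) =ᵐ[P]
          (fun _ => (Real.exp 1)⁻¹ / (lam1 + lam2)) := by
        filter_upwards [h] with ω hω
        exact (hfb ω).2.mpr hω
      rw [hIdef, integral_congr_ae hcongr]
      simp
  obtain ⟨hineq, hiff⟩ := cc_ineq lam1 lam2 I (Real.exp 1) hlam1 hlam2 hm0 hE ht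
  refine ⟨hineq, ?_⟩
  rw [hiff, hmeq]
  constructor
  · rintro ⟨h12, hae⟩
    exact ⟨h12, by linarith, hae⟩
  · rintro ⟨h12, _, hae⟩
    exact ⟨h12, hae⟩
end

section
/- Fix α > 0 and λ1, λ2 > 0 with λ = λ1 + λ2, and write c = (1 + 1/α)^{α+1}. Then −2·λ1·λ2 / (λ · sqrt((c·λ − 2·λ1)·(c·λ − 2·λ2))) ≥ −1 / (2·(c − 1)), with equality if and only if λ1 = λ2 = λ/2. (Here c·λ − 2·λ_k > 0 since (1 + 1/α)^{α+1} > 2 for all α > 0.) -/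
open Real

set_option maxHeartbeats 1000000 in
/-- With `c = (1 + 1/α)^(α+1)` and `λ = λ1 + λ2`,
`−2·λ1·λ2/(λ·sqrt((c·λ − 2·λ1)·(c·λ − 2·λ2))) ≥ −1/(2·(c − 1))`,
with equality if and only if `λ1 = λ2 = λ/2`. -/
theorem gamma_cc_lower_bound (α lam1 lam2 : ℝ) (hα : 0 < α)
    (hlam1 : 0 < lam1) (hlam2 : 0 < lam2) :
    (-(1 / (2 * ((1 + 1 / α) ^ (α + 1) - 1))) ≤
      -(2 * lam1 * lam2) / ((lam1 + lam2) *
        Real.sqrt (((1 + 1 / α) ^ (α + 1) * (lam1 + lam2) - 2 * lam1) *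
          ((1 + 1 / α) ^ (α + 1) * (lam1 + lam2) - 2 * lam2)))) ∧
    (-(2 * lam1 * lam2) / ((lam1 + lam2) *
        Real.sqrt (((1 + 1 / α) ^ (α + 1) * (lam1 + lam2) - 2 * lam1) *
          ((1 + 1 / α) ^ (α + 1) * (lam1 + lam2) - 2 * lam2))) =
        -(1 / (2 * ((1 + 1 / α) ^ (α + 1) - 1))) ↔
      lam1 = lam2 ∧ lam1 = (lam1 + lam2) / 2) := by
  set c : ℝ := (1 + 1 / α) ^ (α + 1) with hc_def
  have hαinv : (0:ℝ) < 1 / α := by positivity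
  have hc : 2 < c := by
    have hber := one_add_mul_self_le_rpow_one_add
      (by linarith : (-1:ℝ) ≤ 1 / α) (by linarith : (1:ℝ) ≤ α + 1)
    have h1 : (α + 1) * (1 / α) = 1 + 1 / α := by
      field_simp
    rw [h1] at hber
    have : (0:ℝ) < 1 / α := hαinv
    linarith
  set a := lam1 with ha_def
  set b := lam2 with hb_def
  set s := a + b with hs_def
  have hs : 0 < s := by positivity
  have hA : 0 < c * s - 2 * a := by nlinarith
  have hB : 0 < c * s - 2 * b := by nlinarith
  have hD : 0 < (c * s - 2 * a) * (c * s - 2 * b) := mul_pos hA hB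
  set r := Real.sqrt ((c * s - 2 * a) * (c * s - 2 * b)) with hr_def
  have hr : 0 < r := Real.sqrt_pos.mpr hD
  have hr2 : r ^ 2 = (c * s - 2 * a) * (c * s - 2 * b) := Real.sq_sqrt hD.le
  have hc1 : 0 < c - 1 := by linarith
  -- key factorization
  have hfact : s ^ 2 * ((c * s - 2 * a) * (c * s - 2 * b)) - (4 * a * b * (c - 1)) ^ 2
      = (a - b) ^ 2 * (c * (c - 2) * (8 * a * b + (a - b) ^ 2) + 4 * a * b) := by
    rw [hs_def]; ring
  have hposfac : 0 < c * (c - 2) * (8 * a * b + (a - b) ^ 2) + 4 * a * b := by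
    have h1 : 0 ≤ c * (c - 2) * (8 * a * b + (a - b) ^ 2) :=
      mul_nonneg (mul_nonneg (by linarith) (by linarith)) (by positivity)
    nlinarith [mul_pos hlam1 hlam2]
  have hsq : (4 * a * b * (c - 1)) ^ 2 ≤ (s * r) ^ 2 := by
    have h1 : (s * r) ^ 2 = s ^ 2 * ((c * s - 2 * a) * (c * s - 2 * b)) := by
      rw [mul_pow, hr2]
    nlinarith [mul_nonneg (sq_nonneg (a - b)) hposfac.le]
  have hkey : 4 * a * b * (c - 1) ≤ s * r := by
    nlinarith [mul_pos hs hr, mul_pos hlam1 hlam2]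
  constructor
  · rw [neg_div, neg_le_neg_iff]
    rw [div_le_div_iff₀ (by positivity) (by positivity)]
    nlinarith
  · constructor
    · intro h
      rw [neg_div, neg_inj, div_eq_div_iff (by positivity : s * r ≠ 0)
        (by positivity : 2 * (c - 1) ≠ 0)] at h
      · have heq : 4 * a * b * (c - 1) = s * r := by linarith
        have hsqeq : (4 * a * b * (c - 1)) ^ 2 = s ^ 2 * ((c * s - 2 * a) * (c * s - 2 * b)) := by
          rw [heq, mul_pow, hr2]
        have h0 : (a - b) ^ 2 * (c * (c - 2) * (8 * a * b + (a - b) ^ 2) + 4 * a * b) = 0 := by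
          linarith
        have hab : a = b := by
          have h2 := (mul_eq_zero.mp h0).resolve_right hposfac.ne'
          have h3 : a - b = 0 := by
            exact pow_eq_zero_iff (two_ne_zero) |>.mp h2
          linarith
        exact ⟨hab, by rw [hs_def, hab]; ring⟩
    · rintro ⟨hab, -⟩
      have hsb : s = 2 * b := by rw [hs_def, hab]; ring
      have hX : c * s - 2 * a = 2 * b * (c - 1) := by rw [hsb, hab]; ring
      have hY : c * s - 2 * b = 2 * b * (c - 1) := by rw [hsb]; ring
      have hrval : r = 2 * b * (c - 1) := by
        rw [hr_def, hX, hY, Real.sqrt_mul_self (by positivity)]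
      rw [hrval, hsb, hab]
      rw [div_eq_iff (by positivity : (2 * b) * (2 * b * (c - 1)) ≠ 0)]
      field_simp
end

section
/- Let (τ_n, S_n), n ≥ 0, be an i.i.d. sequence of pairs where each τ_n is exponentially distributed with rate λ > 0 and independent of the nonnegative random variable S_n. Let M = inf{n ≥ 0 : S_n ≤ τ_n} and B = Σ_{i=0}^{M−1} τ_i + S_M. Then M is almost surely finite, and for every s ≥ 0, E[exp(−s·B)] = (s + λ)·L_S(s+λ) / (s + λ·L_S(s+λ)), where L_S(u) = E[exp(−u·S_0)]. Consequently, if T is exponentially distributed with rate λ independent of everything else, E[exp(−s·(T + B))] = λ·L_S(s+λ) / (s + λ·L_S(s+λ)). -/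
open MeasureTheory ProbabilityTheory Filter Set
open scoped ENNReal NNReal

namespace BusyAux

/-! ### Calculus helpers -/

lemma integral_exp_neg_mul_Ioi {c : ℝ} (hc : 0 < c) :
    ∫ t in Set.Ioi (0:ℝ), Real.exp (-(c * t)) = 1 / c := by
  have := MeasureTheory.integral_comp_mul_left_Ioi (fun u => Real.exp (-u)) 0 hc
  simp only [mul_zero] at this
  rw [this, integral_exp_neg_Ioi_zero, smul_eq_mul, mul_one, one_div]

lemma integral_exp_neg_mul (c : ℝ) (hc : 0 < c) (x : ℝ) :
    ∫ t in (0:ℝ)..x, Real.exp (-(c * t)) = (1 - Real.exp (-(c * x))) / c := by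
  have h : ∀ t ∈ Set.uIcc (0:ℝ) x,
      HasDerivAt (fun u => -(Real.exp (-(c * u)) / c)) (Real.exp (-(c * t))) t := by
    intro t _
    have h1 : HasDerivAt (fun u : ℝ => -(c * u)) (-c) t := by
      simpa using ((hasDerivAt_id t).const_mul (-c))
    have h2 := (h1.exp.div_const c).neg
    convert h2 using 1
    · rfl
    · rfl
    · rfl
    · field_simp
  have hcont : IntervalIntegrable (fun t => Real.exp (-(c * t))) volume 0 x :=
    (Continuous.intervalIntegrable (by continuity) 0 x)
  rw [intervalIntegral.integral_eq_sub_of_hasDerivAt h hcont]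
  simp only [mul_zero, neg_zero, Real.exp_zero]
  field_simp
  ring

/-! ### The exponential measure -/

lemma exponentialPDFReal_def (r x : ℝ) :
    exponentialPDFReal r x = if 0 ≤ x then r * Real.exp (-(r * x)) else 0 := by
  rw [exponentialPDFReal, gammaPDFReal]
  simp only [Real.rpow_one, Real.Gamma_one, div_one, sub_self, Real.rpow_zero, mul_one]

lemma expMeasure_eq (r : ℝ) : expMeasure r = volume.withDensity (exponentialPDF r) := rfl

lemma integral_expMeasure {lam : ℝ} (hlam : 0 < lam) (g : ℝ → ℝ) :
    ∫ t, g t ∂(expMeasure lam) = ∫ t, exponentialPDFReal lam t * g t := by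
  rw [expMeasure_eq]
  have h1 : (exponentialPDF lam)
      = fun x => ((Real.toNNReal (exponentialPDFReal lam x) : ℝ≥0) : ℝ≥0∞) := rfl
  rw [h1, integral_withDensity_eq_integral_smul (measurable_exponentialPDFReal lam).real_toNNReal]
  congr 1
  funext t
  rw [NNReal.smul_def, smul_eq_mul, Real.coe_toNNReal _ (exponentialPDFReal_nonneg hlam t)]

lemma expMeasure_Iic {lam : ℝ} (hlam : 0 < lam) (x : ℝ) :
    expMeasure lam (Iic x) = ENNReal.ofReal (if 0 ≤ x then 1 - Real.exp (-(lam * x)) else 0) := by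
  rw [expMeasure_eq, withDensity_apply _ measurableSet_Iic,
    lintegral_exponentialPDF_eq_antiDeriv hlam]

lemma expMeasure_Iio {lam : ℝ} (hlam : 0 < lam) (x : ℝ) :
    expMeasure lam (Iio x) = ENNReal.ofReal (if 0 ≤ x then 1 - Real.exp (-(lam * x)) else 0) := by
  have hsing : expMeasure lam {x} = 0 := by
    rw [expMeasure_eq, withDensity_apply _ (measurableSet_singleton x),
      Measure.restrict_eq_zero.mpr (by simp), lintegral_zero_measure]
  have h : expMeasure lam (Iic x) = expMeasure lam (Iio x) + expMeasure lam {x} := by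
    rw [← measure_union (by simp) (measurableSet_singleton x), Set.Iio_union_right]
  rw [← expMeasure_Iic hlam, h, hsing, add_zero]

lemma expMeasure_Iio_toReal {lam : ℝ} (hlam : 0 < lam) {x : ℝ} (hx : 0 ≤ x) :
    (expMeasure lam (Iio x)).toReal = 1 - Real.exp (-(lam * x)) := by
  rw [expMeasure_Iio hlam, if_pos hx, ENNReal.toReal_ofReal]
  have : Real.exp (-(lam * x)) ≤ 1 := by
    rw [Real.exp_le_one_iff]
    simp only [Left.neg_nonpos_iff]
    positivity
  linarith

lemma expMeasure_Ici_toReal {lam : ℝ} (hlam : 0 < lam) {x : ℝ} (hx : 0 ≤ x) :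
    (expMeasure lam (Ici x)).toReal = Real.exp (-(lam * x)) := by
  have : IsProbabilityMeasure (expMeasure lam) := isProbabilityMeasure_expMeasure hlam
  have h1 : (Ici x) = (Iio x)ᶜ := by simp
  have hle : Real.exp (-(lam * x)) ≤ 1 := by
    rw [Real.exp_le_one_iff]
    simp only [Left.neg_nonpos_iff]
    positivity
  have h2 : expMeasure lam (Iio x) ≤ 1 := prob_le_one
  rw [h1, measure_compl measurableSet_Iio (measure_ne_top _ _), measure_univ,
    ENNReal.toReal_sub_of_le h2 (by simp),
    ENNReal.toReal_one, expMeasure_Iio_toReal hlam hx]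
  ring

/-- Laplace transform of the exponential distribution. -/
lemma expMeasure_exp_integral {lam : ℝ} (hlam : 0 < lam) {s : ℝ} (hs : 0 ≤ s) :
    ∫ t, Real.exp (-s * t) ∂(expMeasure lam) = lam / (s + lam) := by
  rw [integral_expMeasure hlam]
  have h1 : (fun t => exponentialPDFReal lam t * Real.exp (-s * t))
      = Set.indicator (Ici (0:ℝ)) (fun t => lam * Real.exp (-((s + lam) * t))) := by
    funext t
    rw [exponentialPDFReal_def, Set.indicator_apply]
    by_cases ht : (0:ℝ) ≤ t
    · rw [if_pos ht, if_pos (mem_Ici.mpr ht), mul_assoc, ← Real.exp_add]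
      ring_nf
    · rw [if_neg ht, if_neg (fun h => ht (mem_Ici.mp h)), zero_mul]
  rw [h1, integral_indicator measurableSet_Ici, integral_Ici_eq_integral_Ioi,
    integral_const_mul, integral_exp_neg_mul_Ioi (by linarith)]
  field_simp

/-- Truncated Laplace transform of the exponential distribution. -/
lemma expMeasure_exp_trunc_integral {lam : ℝ} (hlam : 0 < lam) {s : ℝ} (hs : 0 ≤ s)
    {x : ℝ} (hx : 0 ≤ x) :
    ∫ t, (if 0 ≤ t ∧ t < x then Real.exp (-s * t) else 0) ∂(expMeasure lam)
      = lam / (s + lam) * (1 - Real.exp (-((s + lam) * x))) := by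
  rw [integral_expMeasure hlam]
  have h1 : (fun t => exponentialPDFReal lam t * (if 0 ≤ t ∧ t < x then Real.exp (-s * t) else 0))
      = Set.indicator (Ico (0:ℝ) x) (fun t => lam * Real.exp (-((s + lam) * t))) := by
    funext t
    rw [exponentialPDFReal_def, Set.indicator_apply]
    by_cases ht : (0:ℝ) ≤ t ∧ t < x
    · rw [if_pos ht, if_pos ht.1, if_pos (mem_Ico.mpr ht), mul_assoc, ← Real.exp_add]
      ring_nf
    · rw [if_neg ht, if_neg (fun h => ht (mem_Ico.mp h)), mul_zero]
  rw [h1, integral_indicator measurableSet_Ico, setIntegral_congr_set Ico_ae_eq_Ioc,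
    ← intervalIntegral.integral_of_le hx, intervalIntegral.integral_const_mul,
    integral_exp_neg_mul _ (by linarith)]
  field_simp

/-- The law of a random variable with exponential tail function is the exponential measure. -/
lemma map_eq_expMeasure {Ω : Type*} [MeasurableSpace Ω] (P : Measure Ω) [IsProbabilityMeasure P]
    {X : Ω → ℝ} (hX : Measurable X) {lam : ℝ} (hlam : 0 < lam)
    (htail : ∀ t : ℝ, 0 ≤ t → (P {ω | t < X ω}).toReal = Real.exp (-lam * t)) :
    P.map X = expMeasure lam := by
  have : IsProbabilityMeasure (P.map X) := Measure.isProbabilityMeasure_map hX.aemeasurable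
  have htail' : ∀ t : ℝ, 0 ≤ t → P {ω | t < X ω} = ENNReal.ofReal (Real.exp (-lam * t)) := by
    intro t ht
    rw [← htail t ht, ENNReal.ofReal_toReal (measure_ne_top _ _)]
  refine Measure.ext_of_Iic (P.map X) (expMeasure lam) (fun x => ?_)
  rw [Measure.map_apply hX measurableSet_Iic, expMeasure_Iic hlam]
  by_cases hx : 0 ≤ x
  · have hset : X ⁻¹' (Iic x) = {ω | x < X ω}ᶜ := by
      ext ω
      simp only [Set.mem_preimage, mem_Iic, Set.mem_compl_iff, Set.mem_setOf_eq, not_lt]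
    rw [if_pos hx, hset, measure_compl (measurableSet_lt measurable_const hX) (measure_ne_top _ _),
      measure_univ, htail' x hx, ← ENNReal.ofReal_one, ← ENNReal.ofReal_sub _ (Real.exp_nonneg _)]
    congr 2
    ring
  · rw [if_neg hx, ENNReal.ofReal_zero, ← le_zero_iff]
    have hsub : X ⁻¹' (Iic x) ⊆ {ω | (0:ℝ) < X ω}ᶜ := by
      intro ω hω
      simp only [Set.mem_preimage, mem_Iic] at hω
      simp only [Set.mem_compl_iff, Set.mem_setOf_eq, not_lt]
      linarith
    refine le_trans (measure_mono hsub) ?_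
    rw [measure_compl (measurableSet_lt measurable_const hX) (measure_ne_top _ _), measure_univ,
      htail' 0 le_rfl]
    simp

/-! ### Generic measure-theoretic helpers -/

variable {Ω : Type*} [MeasurableSpace Ω]

lemma measurable_nat_cases {f : ℕ → Ω → ℝ} (hf : ∀ n, Measurable (f n))
    {M : Ω → ℕ} (hM : Measurable M) : Measurable fun ω => f (M ω) ω := by
  intro t ht
  have h : (fun ω => f (M ω) ω) ⁻¹' t = ⋃ n, (M ⁻¹' {n}) ∩ (f n ⁻¹' t) := by
    ext ω
    simp only [Set.mem_preimage, Set.mem_iUnion, Set.mem_inter_iff, Set.mem_singleton_iff]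
    exact ⟨fun h => ⟨M ω, rfl, h⟩, fun ⟨n, hn, h⟩ => by rw [hn]; exact h⟩
  rw [h]
  exact MeasurableSet.iUnion fun n => (hM (measurableSet_singleton n)).inter (hf n ht)

lemma integrable_of_abs_le_one {P : Measure Ω} [IsProbabilityMeasure P]
    {f : Ω → ℝ} (hm : AEStronglyMeasurable f P) (hb : ∀ᵐ ω ∂P, |f ω| ≤ 1) :
    Integrable f P :=
  Integrable.mono' (integrable_const 1) hm (by simpa using hb)

lemma integral_prod_range {P : Measure Ω} [IsProbabilityMeasure P]
    {h : ℕ → Ω → ℝ}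
    (hi : iIndepFun h P)
    (hm : ∀ i, Measurable (h i)) (n : ℕ) :
    ∫ ω, ∏ i ∈ Finset.range n, h i ω ∂P = ∏ i ∈ Finset.range n, ∫ ω, h i ω ∂P := by
  induction n with
  | zero => simp
  | succ n ih =>
    simp only [Finset.prod_range_succ]
    rw [← ih]
    have hind : IndepFun (∏ i ∈ Finset.range n, h i) (h n) P :=
      hi.indepFun_prod_range_succ hm n
    have hprodmeas : Measurable (∏ i ∈ Finset.range n, h i) := by
      have := Finset.measurable_prod (Finset.range n) (fun i _ => hm i)
      convert this using 1
      funext ω; simp [Finset.prod_apply]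
    have := hind.integral_mul_eq_mul_integral hprodmeas.aestronglyMeasurable (hm n).aestronglyMeasurable
    calc ∫ ω, (∏ i ∈ Finset.range n, h i ω) * h n ω ∂P
        = ∫ ω, ((∏ i ∈ Finset.range n, h i) * h n) ω ∂P := by
          congr 1; funext ω; simp [Finset.prod_apply]
      _ = (∫ ω, (∏ i ∈ Finset.range n, h i) ω ∂P) * ∫ ω, h n ω ∂P := this
      _ = (∫ ω, ∏ i ∈ Finset.range n, h i ω ∂P) * ∫ ω, h n ω ∂P := by
          congr 1; apply integral_congr_ae; filter_upwards with ω; simp [Finset.prod_apply]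


/-! ### The two elementary integrand functions -/

noncomputable def gtf (s : ℝ) (p : ℝ × ℝ) : ℝ :=
  if 0 ≤ p.1 ∧ p.1 < p.2 then Real.exp (-s * p.1) else 0

noncomputable def gsf (s : ℝ) (p : ℝ × ℝ) : ℝ :=
  if 0 ≤ p.2 ∧ p.2 ≤ p.1 then Real.exp (-s * p.2) else 0

lemma gtf_mk (s t x : ℝ) : gtf s (t, x) = if 0 ≤ t ∧ t < x then Real.exp (-s * t) else 0 := rfl

lemma gsf_mk (s t x : ℝ) : gsf s (t, x) = if 0 ≤ x ∧ x ≤ t then Real.exp (-s * x) else 0 := rfl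

lemma gtf_meas (s : ℝ) : Measurable (gtf s) := by
  refine Measurable.ite ?_ ((measurable_fst.const_mul (-s)).exp) measurable_const
  exact (measurableSet_le measurable_const measurable_fst).inter
    (measurableSet_lt measurable_fst measurable_snd)

lemma gsf_meas (s : ℝ) : Measurable (gsf s) := by
  refine Measurable.ite ?_ ((measurable_snd.const_mul (-s)).exp) measurable_const
  exact (measurableSet_le measurable_const measurable_snd).inter
    (measurableSet_le measurable_snd measurable_fst)

lemma gtf_abs_le {s : ℝ} (hs : 0 ≤ s) (p : ℝ × ℝ) : |gtf s p| ≤ 1 := by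
  rw [gtf]
  by_cases h : 0 ≤ p.1 ∧ p.1 < p.2
  · simp only [if_pos h]
    rw [abs_of_nonneg (Real.exp_nonneg _), Real.exp_le_one_iff]
    nlinarith [h.1]
  · simp [if_neg h]

lemma gsf_abs_le {s : ℝ} (hs : 0 ≤ s) (p : ℝ × ℝ) : |gsf s p| ≤ 1 := by
  rw [gsf]
  by_cases h : 0 ≤ p.2 ∧ p.2 ≤ p.1
  · simp only [if_pos h]
    rw [abs_of_nonneg (Real.exp_nonneg _), Real.exp_le_one_iff]
    nlinarith [h.1]
  · simp [if_neg h]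

end BusyAux

/-- Let `(τ_n, S_n)` be an i.i.d. sequence of pairs, where each `τ_n` is exponentially
distributed with rate `λ > 0` and independent of the nonnegative `S_n`.  With
`M = inf {n | S_n ≤ τ_n}` and `B = Σ_{i<M} τ_i + S_M`:  `M` is a.s. finite and, for every
`s ≥ 0`, `E[exp(−s·B)] = (s+λ)·L_S(s+λ)/(s + λ·L_S(s+λ))` where `L_S(u) = E[exp(−u·S_0)]`.
Consequently, for `T` exponential of rate `λ` independent of `B`,
`E[exp(−s·(T+B))] = λ·L_S(s+λ)/(s + λ·L_S(s+λ))`. -/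
theorem busy_period_transform {Ω : Type*} [MeasurableSpace Ω] (P : Measure Ω)
    [IsProbabilityMeasure P] (τ S : ℕ → Ω → ℝ)
    (hτmeas : ∀ n, Measurable (τ n)) (hSmeas : ∀ n, Measurable (S n))
    (hSnn : ∀ n ω, 0 ≤ S n ω) (lam : ℝ) (hlam : 0 < lam)
    (hτexp : ∀ n, ∀ t : ℝ, 0 ≤ t → (P {ω | t < τ n ω}).toReal = Real.exp (-lam * t))
    (hpairindep : ∀ n, IndepFun (τ n) (S n) P)
    (hindep : iIndepFun
      (fun n ω => (τ n ω, S n ω)) P)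
    (hident : ∀ n, IdentDistrib (fun ω => (τ n ω, S n ω)) (fun ω => (τ 0 ω, S 0 ω)) P P)
    (M : Ω → ℕ) (hM : ∀ ω, M ω = sInf {n | S n ω ≤ τ n ω})
    (B : Ω → ℝ) (hB : ∀ ω, B ω = (∑ i ∈ Finset.range (M ω), τ i ω) + S (M ω) ω)
    (T : Ω → ℝ) (hTmeas : Measurable T)
    (hTexp : ∀ t : ℝ, 0 ≤ t → (P {ω | t < T ω}).toReal = Real.exp (-lam * t))
    (hTindep : IndepFun T B P) :
    (∀ᵐ ω ∂P, {n | S n ω ≤ τ n ω}.Nonempty) ∧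
    (∀ s : ℝ, 0 ≤ s →
      ∫ ω, Real.exp (-s * B ω) ∂P =
        (s + lam) * (∫ ω, Real.exp (-(s + lam) * S 0 ω) ∂P) /
          (s + lam * ∫ ω, Real.exp (-(s + lam) * S 0 ω) ∂P)) ∧
    (∀ s : ℝ, 0 ≤ s →
      ∫ ω, Real.exp (-s * (T ω + B ω)) ∂P =
        lam * (∫ ω, Real.exp (-(s + lam) * S 0 ω) ∂P) /
          (s + lam * ∫ ω, Real.exp (-(s + lam) * S 0 ω) ∂P)) := by
  classical
  have hexpprob : IsProbabilityMeasure (expMeasure lam) := isProbabilityMeasure_expMeasure hlam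
  have hpairmeas : ∀ n, Measurable (fun ω => (τ n ω, S n ω)) :=
    fun n => (hτmeas n).prodMk (hSmeas n)
  have hνlaw : ∀ n, P.map (τ n) = expMeasure lam :=
    fun n => BusyAux.map_eq_expMeasure P (hτmeas n) hlam (hτexp n)
  have hmap : ∀ n, P.map (fun ω => (τ n ω, S n ω)) = (expMeasure lam).prod (P.map (S n)) := by
    intro n
    rw [(indepFun_iff_map_prod_eq_prod_map_map (hτmeas n).aemeasurable
      (hSmeas n).aemeasurable).mp (hpairindep n), hνlaw n]
  have hρprob : ∀ n, IsProbabilityMeasure (P.map (S n)) :=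
    fun n => Measure.isProbabilityMeasure_map (hSmeas n).aemeasurable
  have hρnn : ∀ n, ∀ᵐ x ∂(P.map (S n)), 0 ≤ x := by
    intro n
    rw [ae_iff]
    have h1 : {x : ℝ | ¬ 0 ≤ x} = Set.Iio 0 := by ext x; simp [not_le]
    rw [h1, Measure.map_apply (hSmeas n) measurableSet_Iio]
    have h2 : S n ⁻¹' (Set.Iio 0) = ∅ := by
      ext ω; simp [not_lt.mpr (hSnn n ω)]
    rw [h2, measure_empty]
  -- The generic expectation-via-law computation
  have hEmap : ∀ (n : ℕ) (g : ℝ × ℝ → ℝ), Measurable g →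
      ∫ ω, g (τ n ω, S n ω) ∂P = ∫ p, g p ∂((expMeasure lam).prod (P.map (S n))) := by
    intro n g hg
    rw [← hmap n, integral_map (hpairmeas n).aemeasurable hg.aestronglyMeasurable]
  -- Laplace transform of S n, for any n and c > 0, in terms of n = 0
  have hLn : ∀ (c : ℝ) (n : ℕ), ∫ x, Real.exp (-c * x) ∂(P.map (S n))
      = ∫ ω, Real.exp (-c * S 0 ω) ∂P := by
    intro c n
    have hψ : Measurable fun p : ℝ × ℝ => Real.exp (-c * p.2) :=
      (measurable_snd.const_mul (-c)).exp
    have hm : Measurable fun x : ℝ => Real.exp (-c * x) := (measurable_const_mul (-c)).exp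
    have h1 : ∫ x, Real.exp (-c * x) ∂(P.map (S n)) = ∫ ω, Real.exp (-c * S n ω) ∂P :=
      integral_map (hSmeas n).aemeasurable hm.aestronglyMeasurable
    rw [h1]
    exact ((hident n).comp hψ).integral_eq
  -- bounds on the Laplace transform of S 0
  have hLbnd : ∀ c : ℝ, 0 < c →
      (0 < ∫ ω, Real.exp (-c * S 0 ω) ∂P ∧ (∫ ω, Real.exp (-c * S 0 ω) ∂P) ≤ 1) := by
    intro c hc
    have hmeasf : Measurable fun ω => Real.exp (-c * S 0 ω) := ((hSmeas 0).const_mul (-c)).exp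
    have hintf : Integrable (fun ω => Real.exp (-c * S 0 ω)) P := by
      refine BusyAux.integrable_of_abs_le_one hmeasf.aestronglyMeasurable ?_
      filter_upwards with ω
      rw [abs_of_nonneg (Real.exp_nonneg _), Real.exp_le_one_iff]
      have := hSnn 0 ω
      nlinarith
    constructor
    · rw [integral_pos_iff_support_of_nonneg_ae
        (Filter.Eventually.of_forall fun ω => Real.exp_nonneg _) hintf]
      have : Function.support (fun ω => Real.exp (-c * S 0 ω)) = Set.univ := by
        ext ω; simp [Function.mem_support, Real.exp_ne_zero]
      rw [this]
      simp
    · calc ∫ ω, Real.exp (-c * S 0 ω) ∂P ≤ ∫ _ω, (1:ℝ) ∂P := by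
            refine integral_mono hintf (integrable_const 1) (fun ω => ?_)
            rw [Real.exp_le_one_iff]
            have := hSnn 0 ω
            nlinarith
        _ = 1 := by simp
  -- a.s. positivity of the τ's
  have hτpos : ∀ᵐ ω ∂P, ∀ i, 0 < τ i ω := by
    rw [ae_all_iff]
    intro i
    rw [ae_iff]
    have h1 : P {ω | 0 < τ i ω} = 1 := by
      rw [← ENNReal.toReal_eq_one_iff]
      have := hτexp i 0 le_rfl
      simpa using this
    have h2 : {ω | ¬ 0 < τ i ω} = {ω | 0 < τ i ω}ᶜ := by ext ω; simp
    rw [h2, measure_compl (measurableSet_lt measurable_const (hτmeas i)) (measure_ne_top _ _),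
      measure_univ, h1, tsub_self]
  -- ### Part 1 : a.s. existence of a success
  have hg0meas : Measurable fun p : ℝ × ℝ => if p.1 < p.2 then (1:ℝ) else 0 :=
    Measurable.ite (measurableSet_lt measurable_fst measurable_snd) measurable_const
      measurable_const
  -- value of E[1_{τ < S}]
  have hq0 : ∀ n, ∫ ω, (if τ n ω < S n ω then (1:ℝ) else 0) ∂P
      = 1 - ∫ ω, Real.exp (-lam * S 0 ω) ∂P := by
    intro n
    have := hEmap n _ hg0meas
    rw [this]
    have hint : Integrable (fun p : ℝ × ℝ => if p.1 < p.2 then (1:ℝ) else 0)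
        (((expMeasure lam)).prod (P.map (S n))) := by
      refine BusyAux.integrable_of_abs_le_one hg0meas.aestronglyMeasurable ?_
      filter_upwards with p
      by_cases h : p.1 < p.2 <;> simp [h]
    rw [integral_prod_symm _ hint]
    have hcongr : ∀ᵐ x ∂(P.map (S n)),
        (∫ t, (if t < x then (1:ℝ) else 0) ∂(expMeasure lam))
          = 1 - Real.exp (-lam * x) := by
      filter_upwards [hρnn n] with x hx
      have h1 : (fun t : ℝ => if t < x then (1:ℝ) else 0)
          = Set.indicator (Set.Iio x) (fun _ => (1:ℝ)) := by
        funext t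
        rw [Set.indicator_apply]
        by_cases h : t < x
        · rw [if_pos h, if_pos (Set.mem_Iio.mpr h)]
        · rw [if_neg h, if_neg (fun hh => h (Set.mem_Iio.mp hh))]
      rw [h1, integral_indicator_const _ measurableSet_Iio, smul_eq_mul, mul_one, measureReal_def,
        BusyAux.expMeasure_Iio_toReal hlam hx]
      ring_nf
    rw [integral_congr_ae hcongr, integral_sub (integrable_const 1) ?hint2, integral_const]
    case hint2 =>
      refine BusyAux.integrable_of_abs_le_one
        ((measurable_id.const_mul (-lam)).exp).aestronglyMeasurable ?_
      filter_upwards [hρnn n] with x hx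
      rw [abs_of_nonneg (Real.exp_nonneg _), Real.exp_le_one_iff]
      nlinarith
    rw [hLn lam n]
    simp
  -- probability that the first N attempts all fail
  have hfail : ∀ N : ℕ, (P (⋂ i ∈ Finset.range N, {ω | τ i ω < S i ω})).toReal
      = (1 - ∫ ω, Real.exp (-lam * S 0 ω) ∂P) ^ N := by
    intro N
    have hprod : ∀ ω, (∏ i ∈ Finset.range N, (if τ i ω < S i ω then (1:ℝ) else 0))
        = Set.indicator (⋂ i ∈ Finset.range N, {ω | τ i ω < S i ω}) (fun _ => (1:ℝ)) ω := by
      intro ω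
      rw [Set.indicator_apply]
      by_cases h : ω ∈ ⋂ i ∈ Finset.range N, {ω | τ i ω < S i ω}
      · rw [if_pos h]
        refine Finset.prod_eq_one (fun i hi => ?_)
        rw [if_pos]
        exact Set.mem_iInter₂.mp h i hi
      · rw [if_neg h]
        have hex : ∃ i ∈ Finset.range N, ¬ (τ i ω < S i ω) := by
          by_contra hc
          push_neg at hc
          exact h (Set.mem_iInter₂.mpr fun i hi => hc i hi)
        obtain ⟨i, hi, hni⟩ := hex
        exact Finset.prod_eq_zero hi (by rw [if_neg hni])
    have hiInd : iIndepFun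
        (fun i ω => if τ i ω < S i ω then (1:ℝ) else 0) P := by
      have := hindep.comp (fun _ => fun p : ℝ × ℝ => if p.1 < p.2 then (1:ℝ) else 0)
        (fun _ => hg0meas)
      exact this
    have hEprod := BusyAux.integral_prod_range hiInd
      (fun i => hg0meas.comp (hpairmeas i)) N
    have h2 : ∫ ω, ∏ i ∈ Finset.range N, (if τ i ω < S i ω then (1:ℝ) else 0) ∂P
        = (P (⋂ i ∈ Finset.range N, {ω | τ i ω < S i ω})).toReal := by
      rw [integral_congr_ae (Filter.Eventually.of_forall hprod),
        integral_indicator_const _ ?hmeas, smul_eq_mul, mul_one, measureReal_def]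
      case hmeas =>
        exact MeasurableSet.biInter (Set.to_countable _)
          (fun i _ => measurableSet_lt (hτmeas i) (hSmeas i))
    rw [← h2, hEprod]
    rw [Finset.prod_congr rfl (fun i _ => hq0 i), Finset.prod_const, Finset.card_range]
  have part1 : ∀ᵐ ω ∂P, {n | S n ω ≤ τ n ω}.Nonempty := by
    have hL0 := hLbnd lam hlam
    rw [ae_iff]
    have hsub : ∀ N : ℕ, {ω | ¬ Set.Nonempty {n | S n ω ≤ τ n ω}}
        ⊆ ⋂ i ∈ Finset.range N, {ω | τ i ω < S i ω} := by
      intro N ω hω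
      simp only [Set.mem_setOf_eq, Set.not_nonempty_iff_eq_empty] at hω
      refine Set.mem_iInter₂.mpr (fun i _ => ?_)
      have : i ∉ {n | S n ω ≤ τ n ω} := by rw [hω]; exact Set.notMem_empty i
      exact Set.mem_setOf_eq ▸ lt_of_not_ge this
    have hbound : ∀ N : ℕ, (P {ω | ¬ Set.Nonempty {n | S n ω ≤ τ n ω}}).toReal
        ≤ (1 - ∫ ω, Real.exp (-lam * S 0 ω) ∂P) ^ N := by
      intro N
      exact (ENNReal.toReal_mono (measure_ne_top _ _) (measure_mono (hsub N))).trans_eq (hfail N)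
    have htend : Tendsto (fun N : ℕ => (1 - ∫ ω, Real.exp (-lam * S 0 ω) ∂P) ^ N)
        atTop (nhds 0) :=
      tendsto_pow_atTop_nhds_zero_of_lt_one (by linarith [hL0.2]) (by linarith [hL0.1])
    have hle0 : (P {ω | ¬ Set.Nonempty {n | S n ω ≤ τ n ω}}).toReal ≤ 0 :=
      ge_of_tendsto htend (Filter.Eventually.of_forall hbound)
    have h0 : (P {ω | ¬ Set.Nonempty {n | S n ω ≤ τ n ω}}).toReal = 0 :=
      le_antisymm hle0 ENNReal.toReal_nonneg
    rcases (ENNReal.toReal_eq_zero_iff _).mp h0 with h | h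
    · exact h
    · exact absurd h (measure_ne_top _ _)
  -- ### Measurability of M and B
  have hDmeas : ∀ k, MeasurableSet {ω | S k ω ≤ τ k ω} :=
    fun k => measurableSet_le (hSmeas k) (hτmeas k)
  have hMeq : ∀ (n : ℕ) (ω : Ω), M ω = n ↔
      ((S n ω ≤ τ n ω ∧ ∀ k < n, ¬ (S k ω ≤ τ k ω)) ∨
        (n = 0 ∧ ∀ k, ¬ (S k ω ≤ τ k ω))) := by
    intro n ω
    rw [hM ω]
    constructor
    · intro hsinf
      by_cases hne : {n | S n ω ≤ τ n ω}.Nonempty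
      · left
        refine ⟨hsinf ▸ Nat.sInf_mem hne, fun k hk => ?_⟩
        exact Nat.notMem_of_lt_sInf (hsinf ▸ hk)
      · right
        rw [Set.not_nonempty_iff_eq_empty] at hne
        refine ⟨by rw [← hsinf, hne]; simp, fun k => ?_⟩
        intro hc
        exact (hne ▸ hc : k ∈ (∅ : Set ℕ))
    · rintro (⟨h1, h2⟩ | ⟨h1, h2⟩)
      · refine le_antisymm (Nat.sInf_le h1) ?_
        by_contra hc
        push_neg at hc
        exact h2 _ hc (Nat.sInf_mem (⟨n, h1⟩ : {n | S n ω ≤ τ n ω}.Nonempty))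
      · rw [h1]
        rw [Nat.sInf_eq_zero]
        right
        rw [Set.eq_empty_iff_forall_notMem]
        exact h2
  have hMmeas : Measurable M := by
    refine measurable_to_countable' (fun n => ?_)
    have hset : M ⁻¹' {n} = ({ω | S n ω ≤ τ n ω} ∩ ⋂ k ∈ {k : ℕ | k < n}, {ω | S k ω ≤ τ k ω}ᶜ)
        ∪ ({ω : Ω | n = 0} ∩ ⋂ k, {ω | S k ω ≤ τ k ω}ᶜ) := by
      ext ω
      simp only [Set.mem_preimage, Set.mem_singleton_iff, Set.mem_union, Set.mem_inter_iff,
        Set.mem_iInter, Set.mem_compl_iff, Set.mem_setOf_eq]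
      rw [hMeq n ω]
    rw [hset]
    exact (((hDmeas n).inter (MeasurableSet.biInter (Set.to_countable _)
        (fun k _ => (hDmeas k).compl))).union
      ((MeasurableSet.const _).inter (MeasurableSet.iInter fun k => (hDmeas k).compl)))
  have hBmeas : Measurable B := by
    have h1 : B = fun ω => (fun (n : ℕ) (ω : Ω) => (∑ i ∈ Finset.range n, τ i ω) + S n ω)
        (M ω) ω := funext hB
    rw [h1]
    exact BusyAux.measurable_nat_cases
      (fun n => (Finset.measurable_sum _ (fun i _ => hτmeas i)).add (hSmeas n)) hMmeas
  -- ### Part 2 : the transform of B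
  have part2 : ∀ s : ℝ, 0 ≤ s →
      ∫ ω, Real.exp (-s * B ω) ∂P =
        (s + lam) * (∫ ω, Real.exp (-(s + lam) * S 0 ω) ∂P) /
          (s + lam * ∫ ω, Real.exp (-(s + lam) * S 0 ω) ∂P) := by
    intro s hs
    set Ls : ℝ := ∫ ω, Real.exp (-(s + lam) * S 0 ω) ∂P with hLs_def
    have hLsbnd := hLbnd (s + lam) (by linarith)
    have hLspos : 0 < Ls := hLsbnd.1
    have hLsle1 : Ls ≤ 1 := hLsbnd.2
    -- the two elementary functions on pairs
    have hgtmeas := BusyAux.gtf_meas s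
    have hgsmeas := BusyAux.gsf_meas s
    -- values of the two elementary integrals
    have ha_val : ∫ ω, BusyAux.gtf s (τ 0 ω, S 0 ω) ∂P = lam / (s + lam) * (1 - Ls) := by
      rw [hEmap 0 _ hgtmeas]
      have hint : Integrable (BusyAux.gtf s) ((expMeasure lam).prod (P.map (S 0))) :=
        BusyAux.integrable_of_abs_le_one hgtmeas.aestronglyMeasurable
          (Filter.Eventually.of_forall (BusyAux.gtf_abs_le hs))
      rw [integral_prod_symm _ hint]
      have hcongr : ∀ᵐ x ∂(P.map (S 0)),
          (∫ t, BusyAux.gtf s (t, x) ∂(expMeasure lam))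
            = lam / (s + lam) * (1 - Real.exp (-((s + lam) * x))) := by
        filter_upwards [hρnn 0] with x hx
        simp only [BusyAux.gtf_mk]
        exact BusyAux.expMeasure_exp_trunc_integral hlam hs hx
      rw [integral_congr_ae hcongr]
      have hint2 : Integrable (fun x : ℝ => Real.exp (-((s + lam) * x))) (P.map (S 0)) := by
        refine BusyAux.integrable_of_abs_le_one
          ((measurable_const_mul (s + lam)).neg.exp).aestronglyMeasurable ?_
        filter_upwards [hρnn 0] with x hx
        rw [abs_of_nonneg (Real.exp_nonneg _), Real.exp_le_one_iff]
        nlinarith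
      rw [integral_const_mul, integral_sub (integrable_const 1) hint2, integral_const]
      have h3 : ∫ x, Real.exp (-((s + lam) * x)) ∂(P.map (S 0)) = Ls := by
        have h4 : (fun x : ℝ => Real.exp (-((s + lam) * x)))
            = fun x : ℝ => Real.exp (-(s + lam) * x) := by
          funext x; ring_nf
        rw [h4, hLn (s + lam) 0]
      rw [h3]
      simp
    have hb_val : ∫ ω, BusyAux.gsf s (τ 0 ω, S 0 ω) ∂P = Ls := by
      rw [hEmap 0 _ hgsmeas]
      have hint : Integrable (BusyAux.gsf s) ((expMeasure lam).prod (P.map (S 0))) :=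
        BusyAux.integrable_of_abs_le_one hgsmeas.aestronglyMeasurable
          (Filter.Eventually.of_forall (BusyAux.gsf_abs_le hs))
      rw [integral_prod_symm _ hint]
      have hcongr : ∀ᵐ x ∂(P.map (S 0)),
          (∫ t, BusyAux.gsf s (t, x) ∂(expMeasure lam)) = Real.exp (-(s + lam) * x) := by
        filter_upwards [hρnn 0] with x hx
        have h1 : (fun t : ℝ => BusyAux.gsf s (t, x))
            = Set.indicator (Set.Ici x) (fun _ => Real.exp (-s * x)) := by
          funext t
          rw [BusyAux.gsf_mk, Set.indicator_apply]
          by_cases h : x ≤ t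
          · rw [if_pos ⟨hx, h⟩, if_pos (Set.mem_Ici.mpr h)]
          · rw [if_neg (fun hh : 0 ≤ x ∧ x ≤ t => h hh.2),
              if_neg (fun hh => h (Set.mem_Ici.mp hh))]
        rw [h1, integral_indicator_const _ measurableSet_Ici, smul_eq_mul, measureReal_def,
          BusyAux.expMeasure_Ici_toReal hlam hx, ← Real.exp_add]
        ring_nf
      rw [integral_congr_ae hcongr, hLn (s + lam) 0]
    set a : ℝ := lam / (s + lam) * (1 - Ls) with ha_def
    have ha0 : 0 ≤ a := by
      apply mul_nonneg
      · positivity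
      · linarith
    have ha1 : a < 1 := by
      have h1 : lam / (s + lam) ≤ 1 := by
        rw [div_le_one (by linarith)]
        linarith
      calc a ≤ 1 * (1 - Ls) := by
              apply mul_le_mul_of_nonneg_right h1
              linarith
        _ = 1 - Ls := one_mul _
        _ < 1 := by linarith
    -- identically distributed values
    have han : ∀ n, ∫ ω, BusyAux.gtf s (τ n ω, S n ω) ∂P = a := by
      intro n
      rw [← ha_val]
      exact ((hident n).comp hgtmeas).integral_eq
    have hbn : ∀ n, ∫ ω, BusyAux.gsf s (τ n ω, S n ω) ∂P = Ls := by
      intro n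
      rw [← hb_val]
      exact ((hident n).comp hgsmeas).integral_eq
    -- the disjoint decomposition of the sample space
    set C : ℕ → Set Ω := fun i => {ω | 0 ≤ τ i ω ∧ τ i ω < S i ω} with hC_def
    set A : ℕ → Set Ω := fun n => (⋂ i ∈ Finset.range n, C i) ∩ {ω | S n ω ≤ τ n ω} with hA_def
    have hCmem : ∀ i ω, ω ∈ C i ↔ (0 ≤ τ i ω ∧ τ i ω < S i ω) := fun i ω => Iff.rfl
    have hAmem : ∀ n ω, ω ∈ A n ↔
        (ω ∈ ⋂ i ∈ Finset.range n, C i ∧ S n ω ≤ τ n ω) := fun n ω => Iff.rfl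
    have hCmeas : ∀ i, MeasurableSet (C i) :=
      fun i => (measurableSet_le measurable_const (hτmeas i)).inter
        (measurableSet_lt (hτmeas i) (hSmeas i))
    have hAmeas : ∀ n, MeasurableSet (A n) :=
      fun n => (MeasurableSet.biInter (Set.to_countable _) fun i _ => hCmeas i).inter (hDmeas n)
    have hdisj : Pairwise (Function.onFun Disjoint A) := by
      have key : ∀ m n, m < n → Disjoint (A m) (A n) := by
        intro m n hmn
        rw [Set.disjoint_left]
        intro ω hωm hωn
        have h1 : S m ω ≤ τ m ω := ((hAmem m ω).mp hωm).2
        have h2 : ω ∈ C m :=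
          Set.mem_iInter₂.mp ((hAmem n ω).mp hωn).1 m (Finset.mem_range.mpr hmn)
        exact absurd h1 (not_le_of_gt ((hCmem m ω).mp h2).2)
      intro m n hmn
      rcases hmn.lt_or_gt with h | h
      · exact key m n h
      · exact (key n m h).symm
    have hMA : ∀ n ω, ω ∈ A n → M ω = n := by
      intro n ω hω
      rw [hMeq n ω]
      left
      refine ⟨((hAmem n ω).mp hω).2, fun k hk hc => ?_⟩
      have h2 : ω ∈ C k :=
        Set.mem_iInter₂.mp ((hAmem n ω).mp hω).1 k (Finset.mem_range.mpr hk)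
      exact absurd hc (not_le_of_gt ((hCmem k ω).mp h2).2)
    have hcover : ∀ᵐ ω ∂P, ω ∈ ⋃ n, A n := by
      filter_upwards [part1, hτpos] with ω hne hpos
      refine Set.mem_iUnion.mpr ⟨sInf {n | S n ω ≤ τ n ω}, (hAmem _ ω).mpr ⟨?_, Nat.sInf_mem hne⟩⟩
      refine Set.mem_iInter₂.mpr (fun i hi => ?_)
      have h1 : i ∉ {n | S n ω ≤ τ n ω} :=
        Nat.notMem_of_lt_sInf (Finset.mem_range.mp hi)
      exact (hCmem i ω).mpr ⟨(hpos i).le, lt_of_not_ge h1⟩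
    have hUc : P ((⋃ n, A n)ᶜ) = 0 := by
      have h := ae_iff.mp hcover
      have h2 : {a | ¬ a ∈ ⋃ n, A n} = (⋃ n, A n)ᶜ := rfl
      rwa [h2] at h
    -- each piece equals an indicator
    have hF_eq : ∀ n ω,
        (∏ i ∈ Finset.range n, BusyAux.gtf s (τ i ω, S i ω)) * BusyAux.gsf s (τ n ω, S n ω)
          = Set.indicator (A n) (fun ω => Real.exp (-s * B ω)) ω := by
      intro n ω
      rw [Set.indicator_apply]
      by_cases h : ω ∈ A n
      · rw [if_pos h]
        have hBω : B ω = (∑ i ∈ Finset.range n, τ i ω) + S n ω := by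
          rw [hB ω, hMA n ω h]
        have h1 : ∀ i ∈ Finset.range n, BusyAux.gtf s (τ i ω, S i ω)
            = Real.exp (-s * τ i ω) := by
          intro i hi
          have h2 : ω ∈ C i := Set.mem_iInter₂.mp ((hAmem n ω).mp h).1 i hi
          rw [BusyAux.gtf_mk]
          exact if_pos ((hCmem i ω).mp h2)
        have h3 : BusyAux.gsf s (τ n ω, S n ω) = Real.exp (-s * S n ω) := by
          rw [BusyAux.gsf_mk]
          exact if_pos ⟨hSnn n ω, ((hAmem n ω).mp h).2⟩
        rw [Finset.prod_congr rfl h1, h3, ← Real.exp_sum, ← Real.exp_add, hBω]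
        congr 1
        rw [← Finset.mul_sum]
        ring
      · rw [if_neg h]
        by_cases h2 : ω ∈ ⋂ i ∈ Finset.range n, C i
        · have h3 : ¬ (S n ω ≤ τ n ω) := fun hc => h ((hAmem n ω).mpr ⟨h2, hc⟩)
          have h4 : BusyAux.gsf s (τ n ω, S n ω) = 0 := by
            rw [BusyAux.gsf_mk]
            exact if_neg (fun hc => h3 hc.2)
          rw [h4, mul_zero]
        · have hex : ∃ i ∈ Finset.range n, ω ∉ C i := by
            by_contra hc
            push_neg at hc
            exact h2 (Set.mem_iInter₂.mpr hc)
          obtain ⟨i, hi, hni⟩ := hex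
          have h4 : BusyAux.gtf s (τ i ω, S i ω) = 0 := by
            rw [BusyAux.gtf_mk]
            exact if_neg (fun hc => hni ((hCmem i ω).mpr hc))
          rw [Finset.prod_eq_zero hi h4, zero_mul]
    -- the integral of each piece
    have hFint : ∀ n, ∫ ω,
        (∏ i ∈ Finset.range n, BusyAux.gtf s (τ i ω, S i ω)) * BusyAux.gsf s (τ n ω, S n ω) ∂P
          = a ^ n * Ls := by
      intro n
      have hφmeas : ∀ i : ℕ, Measurable (if i = n then BusyAux.gsf s else BusyAux.gtf s) := by
        intro i
        by_cases h : i = n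
        · rw [if_pos h]; exact hgsmeas
        · rw [if_neg h]; exact hgtmeas
      have hiInd : iIndepFun
          (fun i ω => (if i = n then BusyAux.gsf s else BusyAux.gtf s) (τ i ω, S i ω)) P :=
        hindep.comp _ hφmeas
      have hφm2 : ∀ i, Measurable
          (fun ω => (if i = n then BusyAux.gsf s else BusyAux.gtf s) (τ i ω, S i ω)) :=
        fun i => (hφmeas i).comp (hpairmeas i)
      have hF_rw : ∀ ω : Ω,
          (∏ i ∈ Finset.range n, BusyAux.gtf s (τ i ω, S i ω)) * BusyAux.gsf s (τ n ω, S n ω)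
          = ∏ i ∈ Finset.range (n + 1),
              (if i = n then BusyAux.gsf s else BusyAux.gtf s) (τ i ω, S i ω) := by
        intro ω
        rw [Finset.prod_range_succ, if_pos rfl]
        congr 1
        refine (Finset.prod_congr rfl (fun i hi => ?_)).symm
        rw [if_neg (Nat.ne_of_lt (Finset.mem_range.mp hi))]
      rw [integral_congr_ae (Filter.Eventually.of_forall hF_rw),
        BusyAux.integral_prod_range hiInd hφm2 (n + 1), Finset.prod_range_succ, if_pos rfl]
      have h1 : ∀ i ∈ Finset.range n,
          ∫ ω, (if i = n then BusyAux.gsf s else BusyAux.gtf s) (τ i ω, S i ω) ∂P = a := by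
        intro i hi
        rw [if_neg (Nat.ne_of_lt (Finset.mem_range.mp hi))]
        exact han i
      rw [Finset.prod_congr rfl h1, Finset.prod_const, Finset.card_range, hbn n]
    -- nonnegativity of B a.s. and integrability
    have hBnn : ∀ᵐ ω ∂P, 0 ≤ B ω := by
      filter_upwards [hτpos] with ω hpos
      rw [hB ω]
      have h1 : 0 ≤ ∑ i ∈ Finset.range (M ω), τ i ω :=
        Finset.sum_nonneg (fun i _ => (hpos i).le)
      have h2 := hSnn (M ω) ω
      linarith
    have hfint : Integrable (fun ω => Real.exp (-s * B ω)) P := by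
      refine BusyAux.integrable_of_abs_le_one
        ((hBmeas.const_mul (-s)).exp).aestronglyMeasurable ?_
      filter_upwards [hBnn] with ω hω
      rw [abs_of_nonneg (Real.exp_nonneg _), Real.exp_le_one_iff]
      nlinarith
    -- decompose the integral
    have hdecomp : ∫ ω, Real.exp (-s * B ω) ∂P
        = ∑' n, ∫ ω in A n, Real.exp (-s * B ω) ∂P := by
      have h1 := integral_add_compl (MeasurableSet.iUnion hAmeas) hfint
      have h2 : ∫ ω in (⋃ n, A n)ᶜ, Real.exp (-s * B ω) ∂P = 0 := by
        rw [Measure.restrict_eq_zero.mpr hUc]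
        exact integral_zero_measure _
      have h3 : ∫ ω in ⋃ n, A n, Real.exp (-s * B ω) ∂P
          = ∑' n, ∫ ω in A n, Real.exp (-s * B ω) ∂P :=
        integral_iUnion hAmeas hdisj hfint.integrableOn
      rw [← h1, h2, add_zero, h3]
    have hpieces : ∀ n, ∫ ω in A n, Real.exp (-s * B ω) ∂P = a ^ n * Ls := by
      intro n
      rw [← integral_indicator (hAmeas n), ← hFint n]
      exact integral_congr_ae (Filter.Eventually.of_forall (fun ω => (hF_eq n ω).symm))
    rw [hdecomp]
    simp_rw [hpieces]
    rw [tsum_mul_right, tsum_geometric_of_lt_one ha0 ha1]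
    -- final algebra
    have hden : 0 < s + lam * Ls := by nlinarith
    have h1a : 1 - a = (s + lam * Ls) / (s + lam) := by
      rw [ha_def]
      field_simp
      ring
    rw [h1a, inv_div, hLs_def]
    field_simp
  -- ### Part 3 : the transform of T + B
  refine ⟨part1, part2, ?_⟩
  intro s hs
  have hTlaw : P.map T = expMeasure lam := BusyAux.map_eq_expMeasure P hTmeas hlam hTexp
  have hET : ∫ ω, Real.exp (-s * T ω) ∂P = lam / (s + lam) := by
    have hm : Measurable fun x : ℝ => Real.exp (-s * x) := (measurable_const_mul (-s)).exp
    have h1 : ∫ x, Real.exp (-s * x) ∂(P.map T) = ∫ ω, Real.exp (-s * T ω) ∂P :=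
      integral_map hTmeas.aemeasurable hm.aestronglyMeasurable
    rw [← h1, hTlaw, BusyAux.expMeasure_exp_integral hlam hs]
  have hsplit : ∀ ω, Real.exp (-s * (T ω + B ω)) = Real.exp (-s * T ω) * Real.exp (-s * B ω) := by
    intro ω
    rw [← Real.exp_add]
    ring_nf
  have hindTB : IndepFun (fun ω => Real.exp (-s * T ω)) (fun ω => Real.exp (-s * B ω)) P := by
    have hφ : Measurable fun u : ℝ => Real.exp (-s * u) := (measurable_id.const_mul (-s)).exp
    exact hTindep.comp hφ hφ
  have hmul := hindTB.integral_mul_eq_mul_integral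
    ((hTmeas.const_mul (-s)).exp).aestronglyMeasurable
    ((hBmeas.const_mul (-s)).exp).aestronglyMeasurable
  calc ∫ ω, Real.exp (-s * (T ω + B ω)) ∂P
      = ∫ ω, Real.exp (-s * T ω) * Real.exp (-s * B ω) ∂P :=
        integral_congr_ae (Filter.Eventually.of_forall hsplit)
    _ = (∫ ω, Real.exp (-s * T ω) ∂P) * ∫ ω, Real.exp (-s * B ω) ∂P := hmul
    _ = lam / (s + lam) * ((s + lam) * (∫ ω, Real.exp (-(s + lam) * S 0 ω) ∂P) /
          (s + lam * ∫ ω, Real.exp (-(s + lam) * S 0 ω) ∂P)) := by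
        rw [hET, part2 s hs]
    _ = lam * (∫ ω, Real.exp (-(s + lam) * S 0 ω) ∂P) /
          (s + lam * ∫ ω, Real.exp (-(s + lam) * S 0 ω) ∂P) := by
        have hL := hLbnd (s + lam) (by linarith)
        set L := ∫ ω, Real.exp (-(s + lam) * S 0 ω) ∂P with hL_def
        have hden : 0 < s + lam * L := by nlinarith [hL.1]
        have hslam : (0:ℝ) < s + lam := by linarith
        rw [div_mul_eq_mul_div, mul_div_assoc, mul_div_assoc,
          mul_div_cancel_left₀ _ (ne_of_gt hslam), mul_div_assoc]
end

section
/- Let K ∈ ℕ and let (τ_n, c_n, S_n), n ≥ 0, be an i.i.d. sequence of triples where each τ_n is exponentially distributed with rate λ = λ_1 + ⋯ + λ_K > 0 and independent of the pair (c_n, S_n); the mark c_n takes value k ∈ {1,…,K} with probability λ_k/λ, and conditionally on c_n = k the nonnegative service time S_n has Laplace transform L_{S,k}(s) = E[exp(−s·S_n) | c_n = k]. Let M = inf{n ≥ 0 : S_n ≤ τ_n} and B = Σ_{i=0}^{M−1} τ_i + S_M. Then for every s ≥ 0 and k ∈ {1,…,K}, E[exp(−s·B)·1{c_M = k}] = (λ_k/λ)·L_{S,k}(s+λ)·(s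 + λ) / (s + λ·L_S(s+λ)), where L_S(u) = (1/λ)·Σ_{j=1}^K λ_j·L_{S,j}(u). -/
open MeasureTheory ProbabilityTheory Filter Set
open scoped ENNReal NNReal

section helpers

lemma mylemA (μ : Measure ℝ) [IsProbabilityMeasure μ] {l : ℝ} (hl : 0 < l)
    (h : ∀ t : ℝ, 0 ≤ t → (μ (Set.Ioi t)).toReal = Real.exp (-l * t)) :
    μ = expMeasure l := by
  have hIoi : ∀ t : ℝ, 0 ≤ t → μ (Set.Ioi t) = ENNReal.ofReal (Real.exp (-l * t)) := by
    intro t ht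
    rw [← h t ht, ENNReal.ofReal_toReal (measure_ne_top _ _)]
  have hP : IsProbabilityMeasure (expMeasure l) := isProbabilityMeasure_expMeasure hl
  have hpdf : expMeasure l = volume.withDensity (exponentialPDF l) := rfl
  refine MeasureTheory.Measure.ext_of_Iic μ (expMeasure l) fun x => ?_
  have hexp : expMeasure l (Iic x)
      = ENNReal.ofReal (if 0 ≤ x then 1 - Real.exp (-(l * x)) else 0) := by
    rw [hpdf, withDensity_apply _ measurableSet_Iic,
      lintegral_exponentialPDF_eq_antiDeriv hl x]
  rcases le_or_gt 0 x with hx | hx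
  · have hcompl : μ (Iic x) = 1 - μ (Ioi x) := by
      have := measure_compl (measurableSet_Ioi (a := x)) (measure_ne_top μ _)
      simpa [Set.compl_Ioi, measure_univ] using this
    rw [hexp, if_pos hx, hcompl, hIoi x hx]
    rw [ENNReal.ofReal_sub _ (Real.exp_nonneg _), ENNReal.ofReal_one]
    ring_nf
  · have h0 : μ (Iic x) = 0 := by
      have h1 : μ (Set.Ioi (0:ℝ)) = 1 := by
        have := hIoi 0 le_rfl; simpa using this
      have h2 : μ (Set.Ioi (0:ℝ))ᶜ = 0 := by
        rw [measure_compl measurableSet_Ioi (measure_ne_top μ _), h1, measure_univ, tsub_self]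
      refine measure_mono_null (fun t ht => ?_) h2
      simp only [Set.mem_compl_iff, Set.mem_Ioi, not_lt]
      exact le_of_lt (lt_of_le_of_lt ht hx)
    rw [hexp, if_neg (not_le.mpr hx), h0, ENNReal.ofReal_zero]

lemma mylemB {l : ℝ} (hl : 0 < l) {x : ℝ} (hx : 0 ≤ x) :
    ((expMeasure l) (Set.Ici x)).toReal = Real.exp (-(l * x)) := by
  have hP : IsProbabilityMeasure (expMeasure l) := isProbabilityMeasure_expMeasure hl
  have hpdf : expMeasure l = volume.withDensity (exponentialPDF l) := rfl
  have hIic : expMeasure l (Iic x) = ENNReal.ofReal (1 - Real.exp (-(l * x))) := by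
    rw [hpdf, withDensity_apply _ measurableSet_Iic,
      lintegral_exponentialPDF_eq_antiDeriv hl x, if_pos hx]
  have hsing : expMeasure l {x} = 0 := by
    rw [hpdf, withDensity_apply _ (measurableSet_singleton x)]
    rw [Measure.restrict_eq_zero.mpr (by simp)]
    simp
  have hIio : expMeasure l (Iio x) = ENNReal.ofReal (1 - Real.exp (-(l * x))) := by
    have h1 : expMeasure l (Iic x) ≤ expMeasure l (Iio x) + expMeasure l {x} := by
      rw [← Iio_union_right]; exact measure_union_le _ _
    rw [hsing, add_zero] at h1
    refine le_antisymm ?_ ?_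
    · rw [← hIic]; exact measure_mono Set.Iio_subset_Iic_self
    · rw [← hIic]; exact h1
  have hcompl : expMeasure l (Ici x) = 1 - expMeasure l (Iio x) := by
    have := measure_compl (μ := expMeasure l) (measurableSet_Iio (a := x))
      (measure_ne_top (expMeasure l) _)
    simpa [Set.compl_Iio, measure_univ] using this
  have he1 : Real.exp (-(l * x)) ≤ 1 :=
    Real.exp_le_one_iff.mpr (by nlinarith)
  rw [hcompl, hIio]
  have : (1 : ℝ≥0∞) - ENNReal.ofReal (1 - Real.exp (-(l * x)))
      = ENNReal.ofReal (Real.exp (-(l * x))) := by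
    rw [← ENNReal.ofReal_one, ← ENNReal.ofReal_sub _ (by linarith [Real.exp_pos (-(l*x))])]
    norm_num
  rw [this, ENNReal.toReal_ofReal (Real.exp_nonneg _)]

lemma mylemC {l a x : ℝ} (hl : 0 < l) (ha : 0 ≤ a) (hx : 0 ≤ x) :
    ∫ t, (if t < x then Real.exp (-a * t) else 0) ∂(expMeasure l)
      = l / (a + l) * (1 - Real.exp (-((a + l) * x))) := by
  have hpdf : expMeasure l = volume.withDensity (exponentialPDF l) := rfl
  have hpdf2 : (fun t => ((Real.toNNReal (exponentialPDFReal l t) : ℝ≥0) : ℝ≥0∞))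
      = exponentialPDF l := rfl
  have hmeas : Measurable fun t => Real.toNNReal (exponentialPDFReal l t) :=
    (measurable_exponentialPDFReal l).real_toNNReal
  rw [hpdf, ← hpdf2, integral_withDensity_eq_integral_smul hmeas]
  have hpdfReal : ∀ t : ℝ, exponentialPDFReal l t
      = if 0 ≤ t then l * Real.exp (-(l * t)) else 0 := by
    intro t
    rw [exponentialPDFReal, gammaPDFReal]
    simp only [Real.rpow_one, Real.Gamma_one, div_one, sub_self, Real.rpow_zero, mul_one]
  have heq : (fun t => Real.toNNReal (exponentialPDFReal l t)
        • (if t < x then Real.exp (-a * t) else 0))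
      = Set.indicator (Set.Ico 0 x) (fun t => l * Real.exp (-((a+l) * t))) := by
    funext t
    simp only [NNReal.smul_def, smul_eq_mul, Set.indicator, Set.mem_Ico]
    rw [Real.coe_toNNReal _ (exponentialPDFReal_nonneg hl t), hpdfReal t]
    have hxx : Real.exp (-(l * t)) * Real.exp (-(a * t)) = Real.exp (-((a + l) * t)) := by
      rw [← Real.exp_add]; congr 1; ring
    by_cases ht : 0 ≤ t <;> by_cases htx : t < x <;>
      simp [ht, htx, mul_assoc, hxx]
  rw [heq, integral_indicator measurableSet_Ico]
  have h2 : ∫ t in Set.Ico 0 x, l * Real.exp (-((a+l) * t))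
      = ∫ t in (0:ℝ)..x, l * Real.exp (-((a+l) * t)) := by
    rw [intervalIntegral.integral_of_le hx, integral_Ico_eq_integral_Ioo, ← integral_Ioc_eq_integral_Ioo]
  rw [h2]
  have hal : a + l ≠ 0 := by positivity
  have H : ∀ t : ℝ, HasDerivAt (fun u => -Real.exp (-((a + l) * u)) / (a + l))
      (Real.exp (-((a + l) * t))) t := by
    intro t
    have hfun : (fun u : ℝ => -((a + l) * u)) = fun u => (-(a + l)) * u := by
      funext u; ring
    have h1 : HasDerivAt (fun u : ℝ => -((a + l) * u)) (-(a + l)) t := by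
      rw [hfun]; simpa using ((hasDerivAt_id t).const_mul (-(a + l)))
    have h2 := (h1.exp.neg).div_const (a + l)
    refine h2.congr_deriv ?_
    field_simp
  have hcont : Continuous fun t : ℝ => Real.exp (-((a + l) * t)) := by
    have : Continuous fun t : ℝ => -((a + l) * t) := (continuous_const.mul continuous_id).neg
    exact Real.continuous_exp.comp this
  have h3 : ∫ t in (0:ℝ)..x, Real.exp (-((a + l) * t))
      = (1 - Real.exp (-((a + l) * x))) / (a + l) := by
    rw [intervalIntegral.integral_eq_sub_of_hasDerivAt (fun t _ => H t)
      (hcont.intervalIntegrable 0 x)]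
    simp only [mul_zero, neg_zero, Real.exp_zero]
    field_simp
    ring
  rw [intervalIntegral.integral_const_mul, h3]
  field_simp

variable {Ω α : Type*} [MeasurableSpace Ω] {mα : MeasurableSpace α}

lemma mylemL1 (P : Measure Ω) [IsProbabilityMeasure P] (T : ℕ → Ω → α)
    (hindep : iIndepFun (m := fun _ : ℕ => mα) T P)
    (hTmeas : ∀ n, Measurable (T n))
    (hident : ∀ n, IdentDistrib (T n) (T 0) P P)
    (F : α → ℝ) (hF : Measurable F) :
    ∀ n, ∫ ω, ∏ i ∈ Finset.range n, F (T i ω) ∂P = (∫ ω, F (T 0 ω) ∂P) ^ n := by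
  intro n
  induction n with
  | zero => simp
  | succ n ih =>
    have hXind : iIndepFun
        (fun i ω => F (T i ω)) P := hindep.comp (fun _ => F) (fun _ => hF)
    have hind := hXind.indepFun_prod_range_succ (fun i => hF.comp (hTmeas i)) n
    have hmeas1 : AEStronglyMeasurable
        (∏ j ∈ Finset.range n, fun ω => F (T j ω)) P := by
      rw [Finset.prod_fn]
      exact (Finset.measurable_prod _ (fun i _ => hF.comp (hTmeas i))).aestronglyMeasurable
    have hmeas2 : AEStronglyMeasurable (fun ω => F (T n ω)) P :=
      (hF.comp (hTmeas n)).aestronglyMeasurable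
    have hmul := hind.integral_mul_eq_mul_integral hmeas1 hmeas2
    have h1 : ∫ ω, ∏ i ∈ Finset.range (n+1), F (T i ω) ∂P
        = ∫ ω, ((∏ j ∈ Finset.range n, fun ω' => F (T j ω')) * fun ω' => F (T n ω')) ω ∂P := by
      congr 1; funext ω
      simp [Finset.prod_apply, Finset.prod_range_succ]
    have h2 : ∫ ω, (∏ j ∈ Finset.range n, fun ω' => F (T j ω')) ω ∂P
        = (∫ ω, F (T 0 ω) ∂P) ^ n := by
      rw [← ih]; congr 1; funext ω; simp [Finset.prod_apply]
    have h3 : ∫ ω, F (T n ω) ∂P = ∫ ω, F (T 0 ω) ∂P :=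
      ((hident n).comp hF).integral_eq
    rw [h1]
    calc ∫ ω, ((∏ j ∈ Finset.range n, fun ω' => F (T j ω')) * fun ω' => F (T n ω')) ω ∂P
        = (∫ ω, (∏ j ∈ Finset.range n, fun ω' => F (T j ω')) ω ∂P)
          * ∫ ω, F (T n ω) ∂P := hmul
      _ = (∫ ω, F (T 0 ω) ∂P) ^ n * ∫ ω, F (T 0 ω) ∂P := by rw [h2, h3]
      _ = (∫ ω, F (T 0 ω) ∂P) ^ (n+1) := by ring

lemma mylemL2 (P : Measure Ω) [IsProbabilityMeasure P] (T : ℕ → Ω → α)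
    (hindep : iIndepFun (m := fun _ : ℕ => mα) T P)
    (hTmeas : ∀ n, Measurable (T n))
    (hident : ∀ n, IdentDistrib (T n) (T 0) P P)
    (F G : α → ℝ) (hF : Measurable F) (hG : Measurable G) (n : ℕ) :
    ∫ ω, (∏ i ∈ Finset.range n, F (T i ω)) * G (T n ω) ∂P
      = (∫ ω, F (T 0 ω) ∂P) ^ n * ∫ ω, G (T 0 ω) ∂P := by
  classical
  set Z : ℕ → Ω → ℝ := fun i ω => (if i = n then G else F) (T i ω) with hZ
  have hZmeas : ∀ i, Measurable (Z i) := by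
    intro i
    by_cases h : i = n
    · subst h; simp only [hZ, eq_self_iff_true, ite_true]; exact hG.comp (hTmeas i)
    · simp only [hZ, h, ite_false]; exact hF.comp (hTmeas i)
  have hZind : iIndepFun Z P :=
    hindep.comp (fun i => if i = n then G else F)
      (fun i => by by_cases h : i = n <;> simp [h, hF, hG])
  have hind := hZind.indepFun_prod_range_succ hZmeas n
  have hmeas1 : AEStronglyMeasurable (∏ j ∈ Finset.range n, Z j) P := by
    rw [Finset.prod_fn]
    exact (Finset.measurable_prod _ (fun i _ => hZmeas i)).aestronglyMeasurable
  have hmul := hind.integral_mul_eq_mul_integral hmeas1 (hZmeas n).aestronglyMeasurable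
  have h1 : ∫ ω, (∏ i ∈ Finset.range n, F (T i ω)) * G (T n ω) ∂P
      = ∫ ω, ((∏ j ∈ Finset.range n, Z j) * Z n) ω ∂P := by
    congr 1; funext ω
    simp only [Pi.mul_apply, Finset.prod_apply, hZ, if_pos rfl]
    congr 1
    refine Finset.prod_congr rfl fun i hi => ?_
    rw [if_neg ((Finset.mem_range.mp hi).ne)]
  have h2 : ∫ ω, (∏ j ∈ Finset.range n, Z j) ω ∂P = (∫ ω, F (T 0 ω) ∂P) ^ n := by
    rw [← mylemL1 P T hindep hTmeas hident F hF n]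
    congr 1; funext ω
    simp only [Finset.prod_apply]
    refine Finset.prod_congr rfl fun i hi => ?_
    simp only [hZ]
    rw [if_neg ((Finset.mem_range.mp hi).ne)]
  have h3 : ∫ ω, Z n ω ∂P = ∫ ω, G (T 0 ω) ∂P := by
    have : Z n = fun ω => G (T n ω) := by funext ω; simp [hZ]
    rw [this]
    exact ((hident n).comp hG).integral_eq
  rw [h1, hmul, h2, h3]

variable {κ : Type*} [MeasurableSpace κ] [MeasurableSingletonClass κ]
    [DecidableEq κ] (P : Measure Ω) [IsProbabilityMeasure P] (τ0 S0 : Ω → ℝ) (c0 : Ω → κ)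

lemma mylemSingleA (hτm : Measurable τ0) (hSm : Measurable S0) (hcm : Measurable c0)
    (hSnn : ∀ ω, 0 ≤ S0 ω) {l : ℝ} (hl : 0 < l)
    (htail : ∀ t : ℝ, 0 ≤ t → (P {ω | t < τ0 ω}).toReal = Real.exp (-l * t))
    (hmi : IndepFun τ0 (fun ω => (c0 ω, S0 ω)) P) {s : ℝ} (hs : 0 ≤ s) :
    ∫ ω, (if τ0 ω < S0 ω then Real.exp (-s * τ0 ω) else 0) ∂P
      = l / (s + l) * (1 - ∫ ω, Real.exp (-((s + l) * S0 ω)) ∂P) := by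
  classical
  have hYm : Measurable fun ω => (c0 ω, S0 ω) := hcm.prodMk hSm
  set μτ := P.map τ0 with hμτdef
  have : IsProbabilityMeasure μτ := Measure.isProbabilityMeasure_map hτm.aemeasurable
  have hμτ : μτ = expMeasure l := by
    refine mylemA μτ hl fun t ht => ?_
    rw [hμτdef, Measure.map_apply hτm measurableSet_Ioi]
    exact htail t ht
  set ν := P.map (fun ω => (c0 ω, S0 ω)) with hνdef
  have : IsProbabilityMeasure ν := Measure.isProbabilityMeasure_map hYm.aemeasurable
  have hmapeq : P.map (fun ω => (τ0 ω, (c0 ω, S0 ω))) = μτ.prod ν :=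
    (indepFun_iff_map_prod_eq_prod_map_map hτm.aemeasurable hYm.aemeasurable).mp hmi
  set Fa : ℝ × κ × ℝ → ℝ := fun p => if p.1 < p.2.2 then Real.exp (-s * p.1) else 0 with hFa
  have hFam : Measurable Fa := by
    apply Measurable.ite
    · exact measurableSet_lt measurable_fst (measurable_snd.snd)
    · exact (measurable_fst.const_mul (-s)).exp
    · exact measurable_const
  have hTm : Measurable fun ω => (τ0 ω, (c0 ω, S0 ω)) := hτm.prodMk hYm
  have step1 : ∫ ω, (if τ0 ω < S0 ω then Real.exp (-s * τ0 ω) else 0) ∂P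
      = ∫ p, Fa p ∂(μτ.prod ν) := by
    rw [← hmapeq, integral_map hTm.aemeasurable hFam.aestronglyMeasurable]
  -- integrability
  have haefst : ∀ᵐ p ∂(μτ.prod ν), 0 ≤ p.1 := by
    have h0 : (μτ.prod ν) {p : ℝ × κ × ℝ | p.1 < 0} = 0 := by
      have hset : {p : ℝ × κ × ℝ | p.1 < 0} = Set.Iio 0 ×ˢ Set.univ := by
        ext p; simp [Set.mem_prod]
      rw [hset, Measure.prod_prod, hμτ]
      have : expMeasure l (Set.Iio 0) = 0 := by
        rw [show expMeasure l = volume.withDensity (exponentialPDF l) from rfl,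
          withDensity_apply _ measurableSet_Iio]
        exact lintegral_exponentialPDF_of_nonpos le_rfl
      rw [this, zero_mul]
    rw [ae_iff]
    have hss : {p : ℝ × κ × ℝ | ¬ 0 ≤ p.1} = {p : ℝ × κ × ℝ | p.1 < 0} := by
      ext p; simp [not_le]
    rw [hss]; exact h0
  have hFaInt : Integrable Fa (μτ.prod ν) := by
    refine Integrable.mono' (integrable_const 1) hFam.aestronglyMeasurable ?_
    filter_upwards [haefst] with p hp
    simp only [hFa]
    split_ifs with h
    · rw [Real.norm_eq_abs, abs_of_nonneg (Real.exp_nonneg _)]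
      exact Real.exp_le_one_iff.mpr (by nlinarith)
    · simp
  rw [step1, integral_prod_symm Fa hFaInt]
  have haeS : ∀ᵐ y ∂ν, 0 ≤ y.2 := by
    rw [ae_iff]
    have hss : {y : κ × ℝ | ¬ 0 ≤ y.2} = {y : κ × ℝ | y.2 < 0} := by
      ext y; simp [not_le]
    rw [hss, hνdef, Measure.map_apply hYm (measurableSet_lt measurable_snd measurable_const)]
    have hpre : (fun ω => (c0 ω, S0 ω)) ⁻¹' {y : κ × ℝ | y.2 < 0} = ∅ := by
      ext ω
      simp only [Set.mem_preimage, Set.mem_setOf_eq, Set.mem_empty_iff_false, iff_false, not_lt]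
      exact hSnn ω
    rw [hpre]; exact measure_empty
  have hinner : ∀ᵐ y ∂ν, ∫ t, Fa (t, y) ∂μτ
      = l / (s + l) * (1 - Real.exp (-((s + l) * y.2))) := by
    filter_upwards [haeS] with y hy
    rw [hμτ]
    exact mylemC hl hs hy
  rw [integral_congr_ae hinner]
  have hgInt : Integrable (fun y : κ × ℝ => Real.exp (-((s + l) * y.2))) ν := by
    refine Integrable.mono' (integrable_const 1)
      ((measurable_snd.const_mul (s+l)).neg.exp.aestronglyMeasurable) ?_
    filter_upwards [haeS] with y hy
    rw [Real.norm_eq_abs, abs_of_nonneg (Real.exp_nonneg _)]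
    refine Real.exp_le_one_iff.mpr (by nlinarith)
  have hsplit : ∫ y, l / (s + l) * (1 - Real.exp (-((s + l) * y.2))) ∂ν
      = l / (s + l) * (1 - ∫ y, Real.exp (-((s + l) * y.2)) ∂ν) := by
    rw [integral_const_mul, integral_sub (integrable_const 1) hgInt]
    simp [measure_univ]
  rw [hsplit]
  congr 2
  rw [hνdef, integral_map hYm.aemeasurable]
  exact ((measurable_snd.const_mul (s+l)).neg.exp.aestronglyMeasurable)

lemma mylemSingleB (hτm : Measurable τ0) (hSm : Measurable S0) (hcm : Measurable c0)
    (hSnn : ∀ ω, 0 ≤ S0 ω) {l : ℝ} (hl : 0 < l)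
    (htail : ∀ t : ℝ, 0 ≤ t → (P {ω | t < τ0 ω}).toReal = Real.exp (-l * t))
    (hmi : IndepFun τ0 (fun ω => (c0 ω, S0 ω)) P) {s : ℝ} (hs : 0 ≤ s) (k : κ) :
    ∫ ω, (if S0 ω ≤ τ0 ω ∧ c0 ω = k then Real.exp (-s * S0 ω) else 0) ∂P
      = ∫ ω, (if c0 ω = k then Real.exp (-((s + l) * S0 ω)) else 0) ∂P := by
  classical
  have hYm : Measurable fun ω => (c0 ω, S0 ω) := hcm.prodMk hSm
  set μτ := P.map τ0 with hμτdef
  have : IsProbabilityMeasure μτ := Measure.isProbabilityMeasure_map hτm.aemeasurable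
  have hμτ : μτ = expMeasure l := by
    refine mylemA μτ hl fun t ht => ?_
    rw [hμτdef, Measure.map_apply hτm measurableSet_Ioi]
    exact htail t ht
  set ν := P.map (fun ω => (c0 ω, S0 ω)) with hνdef
  have : IsProbabilityMeasure ν := Measure.isProbabilityMeasure_map hYm.aemeasurable
  have hmapeq : P.map (fun ω => (τ0 ω, (c0 ω, S0 ω))) = μτ.prod ν :=
    (indepFun_iff_map_prod_eq_prod_map_map hτm.aemeasurable hYm.aemeasurable).mp hmi
  set Fb : ℝ × κ × ℝ → ℝ :=
    fun p => if p.2.2 ≤ p.1 ∧ p.2.1 = k then Real.exp (-s * p.2.2) else 0 with hFb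
  have hFbm : Measurable Fb := by
    apply Measurable.ite
    · exact (measurableSet_le measurable_snd.snd measurable_fst).inter
        (measurable_snd.fst (measurableSet_singleton k))
    · exact (measurable_snd.snd.const_mul (-s)).exp
    · exact measurable_const
  have hTm : Measurable fun ω => (τ0 ω, (c0 ω, S0 ω)) := hτm.prodMk hYm
  have step1 : ∫ ω, (if S0 ω ≤ τ0 ω ∧ c0 ω = k then Real.exp (-s * S0 ω) else 0) ∂P
      = ∫ p, Fb p ∂(μτ.prod ν) := by
    rw [← hmapeq, integral_map hTm.aemeasurable hFbm.aestronglyMeasurable]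
  have haeS : ∀ᵐ y ∂ν, 0 ≤ y.2 := by
    rw [ae_iff]
    have hss : {y : κ × ℝ | ¬ 0 ≤ y.2} = {y : κ × ℝ | y.2 < 0} := by
      ext y; simp [not_le]
    rw [hss, hνdef, Measure.map_apply hYm (measurableSet_lt measurable_snd measurable_const)]
    have hpre : (fun ω => (c0 ω, S0 ω)) ⁻¹' {y : κ × ℝ | y.2 < 0} = ∅ := by
      ext ω
      simp only [Set.mem_preimage, Set.mem_setOf_eq, Set.mem_empty_iff_false, iff_false, not_lt]
      exact hSnn ω
    rw [hpre]; exact measure_empty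
  have hFbInt : Integrable Fb (μτ.prod ν) := by
    have haesnd : ∀ᵐ p ∂(μτ.prod ν), 0 ≤ p.2.2 := by
      have h0 : (μτ.prod ν) {p : ℝ × κ × ℝ | p.2.2 < 0} = 0 := by
        have hset : {p : ℝ × κ × ℝ | p.2.2 < 0} = Set.univ ×ˢ {y : κ × ℝ | y.2 < 0} := by
          ext p; simp [Set.mem_prod]
        rw [hset, Measure.prod_prod]
        have hν0 : ν {y : κ × ℝ | y.2 < 0} = 0 := by
          rw [hνdef, Measure.map_apply hYm (measurableSet_lt measurable_snd measurable_const)]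
          have hpre : (fun ω => (c0 ω, S0 ω)) ⁻¹' {y : κ × ℝ | y.2 < 0} = ∅ := by
            ext ω
            simp only [Set.mem_preimage, Set.mem_setOf_eq, Set.mem_empty_iff_false, iff_false,
              not_lt]
            exact hSnn ω
          rw [hpre]; exact measure_empty
        rw [hν0, mul_zero]
      rw [ae_iff]
      have hss : {p : ℝ × κ × ℝ | ¬ 0 ≤ p.2.2} = {p : ℝ × κ × ℝ | p.2.2 < 0} := by
        ext p; simp [not_le]
      rw [hss]; exact h0
    refine Integrable.mono' (integrable_const 1) hFbm.aestronglyMeasurable ?_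
    filter_upwards [haesnd] with p hp
    simp only [hFb]
    split_ifs with h
    · rw [Real.norm_eq_abs, abs_of_nonneg (Real.exp_nonneg _)]
      exact Real.exp_le_one_iff.mpr (by nlinarith)
    · simp
  rw [step1, integral_prod_symm Fb hFbInt]
  have hinner : ∀ᵐ y ∂ν, ∫ t, Fb (t, y) ∂μτ
      = (if y.1 = k then Real.exp (-((s + l) * y.2)) else 0) := by
    filter_upwards [haeS] with y hy
    have hfun : (fun t => Fb (t, y)) = Set.indicator (Set.Ici y.2)
        (fun _ => if y.1 = k then Real.exp (-s * y.2) else 0) := by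
      funext t
      by_cases h1 : y.2 ≤ t <;> by_cases h2 : y.1 = k <;>
        simp [hFb, Set.indicator, Set.mem_Ici, h1, h2]
    rw [hfun, integral_indicator_const _ measurableSet_Ici, hμτ, measureReal_def, mylemB hl hy, smul_eq_mul]
    by_cases h2 : y.1 = k
    · rw [if_pos h2, if_pos h2, ← Real.exp_add]
      congr 1; ring
    · rw [if_neg h2, if_neg h2, mul_zero]
  have hifm : Measurable fun y : κ × ℝ => if y.1 = k then Real.exp (-((s + l) * y.2)) else 0 := by
    apply Measurable.ite (measurable_fst (measurableSet_singleton k))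
    · exact (measurable_snd.const_mul (s+l)).neg.exp
    · exact measurable_const
  rw [integral_congr_ae hinner, hνdef, integral_map hYm.aemeasurable hifm.aestronglyMeasurable]


end helpers

set_option maxHeartbeats 2000000 in
/-- In the K-source M/G/1/1 pushout server: `(τ_n, c_n, S_n)` are i.i.d. triples, `τ_n`
exponential with rate `λ = λ_1 + ⋯ + λ_K` and independent of `(c_n, S_n)`,
`P(c_n = k) = λ_k/λ`, and `L_{S,k}` is the conditional Laplace transform of `S_n` given
`c_n = k` (so that `E[exp(−s·S_n)·1{c_n = k}] = (λ_k/λ)·L_{S,k}(s)`).  With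
`M = inf {n | S_n ≤ τ_n}` and `B = Σ_{i<M} τ_i + S_M`, for every `s ≥ 0` and every `k`,
`E[exp(−s·B)·1{c_M = k}] = (λ_k/λ)·L_{S,k}(s+λ)·(s+λ)/(s + λ·L_S(s+λ))`, where
`L_S(u) = (1/λ)·Σ_j λ_j·L_{S,j}(u)`. -/
theorem busy_period_transform_multisource {Ω : Type*} [MeasurableSpace Ω]
    (P : Measure Ω) [IsProbabilityMeasure P] (K : ℕ)
    (lam : Fin K → ℝ) (hlam : ∀ k, 0 < lam k)
    (τ S : ℕ → Ω → ℝ) (c : ℕ → Ω → Fin K)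
    (hτmeas : ∀ n, Measurable (τ n)) (hSmeas : ∀ n, Measurable (S n))
    (hcmeas : ∀ n, Measurable (c n)) (hSnn : ∀ n ω, 0 ≤ S n ω)
    (hτexp : ∀ n, ∀ t : ℝ, 0 ≤ t →
      (P {ω | t < τ n ω}).toReal = Real.exp (-(∑ j, lam j) * t))
    (hmarkindep : ∀ n, IndepFun (τ n) (fun ω => (c n ω, S n ω)) P)
    (hcprob : ∀ n, ∀ k : Fin K, (P {ω | c n ω = k}).toReal = lam k / ∑ j, lam j)
    (LS : Fin K → ℝ → ℝ)
    (hLS : ∀ n, ∀ k : Fin K, ∀ s : ℝ,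
      ∫ ω in {ω | c n ω = k}, Real.exp (-s * S n ω) ∂P =
        (lam k / ∑ j, lam j) * LS k s)
    (hindep : iIndepFun
      (fun n ω => (τ n ω, c n ω, S n ω)) P)
    (hident : ∀ n, IdentDistrib (fun ω => (τ n ω, c n ω, S n ω))
      (fun ω => (τ 0 ω, c 0 ω, S 0 ω)) P P)
    (M : Ω → ℕ) (hM : ∀ ω, M ω = sInf {n | S n ω ≤ τ n ω})
    (B : Ω → ℝ) (hB : ∀ ω, B ω = (∑ i ∈ Finset.range (M ω), τ i ω) + S (M ω) ω) :
    ∀ s : ℝ, 0 ≤ s → ∀ k : Fin K,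
      ∫ ω in {ω | c (M ω) ω = k}, Real.exp (-s * B ω) ∂P =
        (lam k / ∑ j, lam j) * LS k (s + ∑ j, lam j) * (s + ∑ j, lam j) /
          (s + (∑ j, lam j) *
            ((∑ j, lam j)⁻¹ * ∑ j, lam j * LS j (s + ∑ j, lam j))) := by
  intro s hs k
  classical
  set l : ℝ := ∑ j, lam j with hldef
  have hl : 0 < l := Finset.sum_pos (fun j _ => hlam j) ⟨k, Finset.mem_univ k⟩
  have hsl : 0 < s + l := by linarith
  set T : ℕ → Ω → ℝ × Fin K × ℝ := fun n ω => (τ n ω, c n ω, S n ω) with hT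
  have hTmeas : ∀ n, Measurable (T n) :=
    fun n => (hτmeas n).prodMk ((hcmeas n).prodMk (hSmeas n))
  set Fa : ℝ × Fin K × ℝ → ℝ := fun p => if p.1 < p.2.2 then Real.exp (-s * p.1) else 0 with hFa
  set Fb : ℝ × Fin K × ℝ → ℝ :=
    fun p => if p.2.2 ≤ p.1 ∧ p.2.1 = k then Real.exp (-s * p.2.2) else 0 with hFb
  have hFam : Measurable Fa := by
    apply Measurable.ite (measurableSet_lt measurable_fst measurable_snd.snd)
    · exact (measurable_fst.const_mul (-s)).exp
    · exact measurable_const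
  have hFbm : Measurable Fb := by
    apply Measurable.ite ((measurableSet_le measurable_snd.snd measurable_fst).inter
      (measurable_snd.fst (measurableSet_singleton k)))
    · exact (measurable_snd.snd.const_mul (-s)).exp
    · exact measurable_const
  have hFann : ∀ p, 0 ≤ Fa p := by
    intro p; rw [hFa]; dsimp only; split_ifs
    · exact Real.exp_nonneg _
    · exact le_rfl
  have hFbnn : ∀ p, 0 ≤ Fb p := by
    intro p; rw [hFb]; dsimp only; split_ifs
    · exact Real.exp_nonneg _
    · exact le_rfl
  have hFble1 : ∀ n ω, Fb (T n ω) ≤ 1 := by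
    intro n ω; rw [hFb, hT]; dsimp only; split_ifs
    · exact Real.exp_le_one_iff.mpr (by nlinarith [hSnn n ω])
    · exact zero_le_one
  -- values
  set LSb : ℝ := ∫ ω, Real.exp (-((s + l) * S 0 ω)) ∂P with hLSbdef
  set r : ℝ := ∫ ω, Fa (T 0 ω) ∂P with hrdef
  set q : ℝ := ∫ ω, Fb (T 0 ω) ∂P with hqdef
  have hLSbInt : Integrable (fun ω => Real.exp (-((s + l) * S 0 ω))) P := by
    refine Integrable.mono' (integrable_const 1)
      ((((hSmeas 0).const_mul (s+l)).neg.exp).aestronglyMeasurable) (ae_of_all _ fun ω => ?_)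
    rw [Real.norm_eq_abs, abs_of_nonneg (Real.exp_nonneg _)]
    exact Real.exp_le_one_iff.mpr (by nlinarith [hSnn 0 ω])
  have hrval : r = l / (s + l) * (1 - LSb) := by
    rw [hrdef, hLSbdef]
    exact mylemSingleA P (τ 0) (S 0) (c 0) (hτmeas 0) (hSmeas 0) (hcmeas 0) (hSnn 0) hl
      (hτexp 0) (hmarkindep 0) hs
  have hqif : q = ∫ ω, (if c 0 ω = k then Real.exp (-((s + l) * S 0 ω)) else 0) ∂P := by
    rw [hqdef]
    exact mylemSingleB P (τ 0) (S 0) (c 0) (hτmeas 0) (hSmeas 0) (hcmeas 0) (hSnn 0) hl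
      (hτexp 0) (hmarkindep 0) hs k
  have hCkmeas : ∀ n, MeasurableSet {ω | c n ω = k} :=
    fun n => (hcmeas n) (measurableSet_singleton k)
  have hqset : q = ∫ ω in {ω | c 0 ω = k}, Real.exp (-((s + l) * S 0 ω)) ∂P := by
    rw [hqif, ← integral_indicator (hCkmeas 0)]
    congr 1; funext ω
    simp [Set.indicator_apply, Set.mem_setOf_eq]
  have hqval : q = (lam k / l) * LS k (s + l) := by
    rw [hqset]
    have h2 := hLS 0 k (s + l)
    simp only [neg_mul] at h2
    exact h2
  -- positivity of q
  have hqpos : 0 < q := by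
    rw [hqset]
    have hsetpos : 0 < P {ω | c 0 ω = k} := by
      have h1 : 0 < (P {ω | c 0 ω = k}).toReal := by
        rw [hcprob 0 k]; exact div_pos (hlam k) hl
      exact (ENNReal.toReal_pos_iff.mp h1).1
    rw [setIntegral_pos_iff_support_of_nonneg_ae (ae_of_all _ fun ω => Real.exp_nonneg _)
      (hLSbInt.integrableOn)]
    have : Function.support (fun ω => Real.exp (-((s + l) * S 0 ω))) = Set.univ := by
      ext ω; simp [Function.mem_support, Real.exp_ne_zero]
    rw [this, Set.univ_inter]
    exact hsetpos
  have hLSb_le1 : LSb ≤ 1 := by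
    rw [hLSbdef]
    calc ∫ ω, Real.exp (-((s + l) * S 0 ω)) ∂P ≤ ∫ _ω, (1:ℝ) ∂P := by
          refine integral_mono hLSbInt (integrable_const 1) fun ω => ?_
          exact Real.exp_le_one_iff.mpr (by nlinarith [hSnn 0 ω])
      _ = 1 := by simp
  have hLSb_pos : 0 < LSb := by
    have hle : q ≤ LSb := by
      rw [hqif, hLSbdef]
      refine integral_mono ?_ hLSbInt fun ω => ?_
      · refine Integrable.mono' (integrable_const 1) ?_ (ae_of_all _ fun ω => ?_)
        · apply Measurable.aestronglyMeasurable
          apply Measurable.ite (hCkmeas 0)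
          · exact ((hSmeas 0).const_mul (s+l)).neg.exp
          · exact measurable_const
        · rw [Real.norm_eq_abs]
          split_ifs
          · rw [abs_of_nonneg (Real.exp_nonneg _)]
            exact Real.exp_le_one_iff.mpr (by nlinarith [hSnn 0 ω])
          · simp
      · split_ifs
        · exact le_rfl
        · exact Real.exp_nonneg _
    linarith
  have hr0 : 0 ≤ r := integral_nonneg fun ω => hFann _
  have hr1 : r < 1 := by
    rw [hrval]
    have hA1 : l / (s + l) ≤ 1 := (div_le_one hsl).mpr (by linarith)
    have hA0 : 0 ≤ l / (s + l) := div_nonneg hl.le hsl.le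
    nlinarith
  -- the product formula
  have hprod : ∀ n, ∫ ω, (∏ i ∈ Finset.range n, Fa (T i ω)) * Fb (T n ω) ∂P = r ^ n * q :=
    fun n => mylemL2 P T hindep hTmeas hident Fa Fb hFam hFbm n
  -- Null set N
  set N : Set Ω := ⋂ n, {ω | τ n ω < S n ω} with hNdef
  have hNmeas : MeasurableSet N :=
    MeasurableSet.iInter fun n => measurableSet_lt (hτmeas n) (hSmeas n)
  set F0 : ℝ × Fin K × ℝ → ℝ := fun p => if p.1 < p.2.2 then (1:ℝ) else 0 with hF0
  have hF0m : Measurable F0 := by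
    apply Measurable.ite (measurableSet_lt measurable_fst measurable_snd.snd) <;>
      exact measurable_const
  set ρ : ℝ := ∫ ω, F0 (T 0 ω) ∂P with hρdef
  have hCn : ∀ n, ∫ ω, ∏ i ∈ Finset.range n, F0 (T i ω) ∂P = ρ ^ n :=
    mylemL1 P T hindep hTmeas hident F0 hF0m
  set Cset : ℕ → Set Ω := fun n => ⋂ i ∈ Finset.range n, {ω | τ i ω < S i ω} with hCset
  have hCmeas : ∀ n, MeasurableSet (Cset n) :=
    fun n => MeasurableSet.biInter (Finset.range n).countable_toSet
      (fun i _ => measurableSet_lt (hτmeas i) (hSmeas i))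
  have hCind : ∀ n, (fun ω => ∏ i ∈ Finset.range n, F0 (T i ω))
      = Set.indicator (Cset n) (fun _ => (1:ℝ)) := by
    intro n; funext ω
    rw [Set.indicator_apply]
    by_cases h : ω ∈ Cset n
    · rw [if_pos h]
      refine Finset.prod_eq_one fun i hi => ?_
      have : τ i ω < S i ω := Set.mem_iInter₂.mp h i hi
      rw [hF0, hT]; exact if_pos this
    · rw [if_neg h]
      rw [hCset] at h
      have : ∃ i ∈ Finset.range n, ¬ τ i ω < S i ω := by
        by_contra hcon
        push_neg at hcon
        exact h (Set.mem_iInter₂.mpr hcon)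
      obtain ⟨i, hi, hni⟩ := this
      refine Finset.prod_eq_zero hi ?_
      rw [hF0, hT]; exact if_neg hni
  have hPC : ∀ n, (P (Cset n)).toReal = ρ ^ n := by
    intro n
    rw [← hCn n, hCind n, integral_indicator_const _ (hCmeas n), smul_eq_mul, mul_one, measureReal_def]
  have hρ0 : 0 ≤ ρ := integral_nonneg fun ω => by
    rw [hF0]; dsimp only; split_ifs; exacts [zero_le_one, le_rfl]
  have hρval : ρ = (P {ω | τ 0 ω < S 0 ω}).toReal := by
    have h1 := hPC 1
    rw [pow_one] at h1
    rw [← h1]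
    have hseteq : Cset 1 = {ω | τ 0 ω < S 0 ω} := by
      rw [hCset]
      ext ω; simp
    rw [hseteq]
  -- ρ < 1
  have hmeasτS : MeasurableSet {ω | τ 0 ω < S 0 ω} := measurableSet_lt (hτmeas 0) (hSmeas 0)
  have hρlt1 : ρ < 1 := by
    have hcompl : {ω | S 0 ω ≤ τ 0 ω} = {ω | τ 0 ω < S 0 ω}ᶜ := by
      ext ω; simp [not_lt]
    have h2 : (P {ω | S 0 ω ≤ τ 0 ω}).toReal = 1 - ρ := by
      rw [hcompl, measure_compl hmeasτS (measure_ne_top P _), measure_univ,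
        ENNReal.toReal_sub_of_le prob_le_one ENNReal.one_ne_top, ENNReal.toReal_one, hρval]
    have h3 : q ≤ (P {ω | S 0 ω ≤ τ 0 ω}).toReal := by
      have hindint : Integrable (Set.indicator {ω | S 0 ω ≤ τ 0 ω} (fun _ => (1:ℝ))) P :=
        (integrable_const 1).indicator (hcompl ▸ hmeasτS.compl)
      have hieq : (P {ω | S 0 ω ≤ τ 0 ω}).toReal
          = ∫ ω, Set.indicator {ω | S 0 ω ≤ τ 0 ω} (fun _ => (1:ℝ)) ω ∂P := by
        rw [integral_indicator_const _ (hcompl ▸ hmeasτS.compl), smul_eq_mul, mul_one, measureReal_def]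
      rw [hieq, hqdef]
      refine integral_mono ?_ hindint fun ω => ?_
      · refine Integrable.mono' (integrable_const 1)
          ((hFbm.comp (hTmeas 0)).aestronglyMeasurable) (ae_of_all _ fun ω => ?_)
        rw [Real.norm_eq_abs, abs_of_nonneg (hFbnn _)]
        exact hFble1 0 ω
      · rw [Set.indicator_apply]
        simp only [Set.mem_setOf_eq]
        by_cases hc : S 0 ω ≤ τ 0 ω
        · rw [if_pos hc]
          exact hFble1 0 ω
        · rw [if_neg hc]
          rw [hFb, hT]; dsimp only
          rw [if_neg (fun hcon => hc hcon.1)]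
    linarith
  have hPN : P N = 0 := by
    have hsub : ∀ n, N ⊆ Cset n := by
      intro n ω hω
      exact Set.mem_iInter₂.mpr fun i _ => Set.mem_iInter.mp hω i
    have hb : ∀ n, (P N).toReal ≤ ρ ^ n := by
      intro n
      rw [← hPC n]
      exact ENNReal.toReal_mono (measure_ne_top _ _) (measure_mono (hsub n))
    have hlim : Tendsto (fun n => ρ ^ n) atTop (nhds 0) :=
      tendsto_pow_atTop_nhds_zero_of_lt_one hρ0 hρlt1
    have h0 : (P N).toReal ≤ 0 := ge_of_tendsto' hlim hb
    have h1 : (P N).toReal = 0 := le_antisymm h0 ENNReal.toReal_nonneg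
    rcases (ENNReal.toReal_eq_zero_iff _).mp h1 with h | h
    · exact h
    · exact absurd h (measure_ne_top P N)
  -- M characterization
  have hMchar : ∀ ω n, S n ω ≤ τ n ω → (∀ i, i < n → τ i ω < S i ω) → M ω = n := by
    intro ω n hn hi
    rw [hM ω]
    refine le_antisymm (Nat.sInf_le hn) ?_
    by_contra hcon
    push_neg at hcon
    have hne : {m | S m ω ≤ τ m ω}.Nonempty := ⟨n, hn⟩
    have hmem := Nat.sInf_mem hne
    exact absurd hmem (not_le.mpr (hi _ hcon))
  have hMN : ∀ ω, ω ∈ N → M ω = 0 := by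
    intro ω hω
    rw [hM ω]
    have hem : {n | S n ω ≤ τ n ω} = ∅ := by
      ext n
      simp only [Set.mem_setOf_eq, Set.mem_empty_iff_false, iff_false, not_le]
      exact Set.mem_iInter.mp hω n
    rw [hem, Nat.sInf_empty]
  have hnotN : ∀ ω, ω ∉ N →
      (S (M ω) ω ≤ τ (M ω) ω) ∧ ∀ i, i < M ω → τ i ω < S i ω := by
    intro ω hω
    have hne : {n | S n ω ≤ τ n ω}.Nonempty := by
      by_contra hcon
      rw [Set.not_nonempty_iff_eq_empty] at hcon
      apply hω
      refine Set.mem_iInter.mpr fun n => ?_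
      have hnm : n ∉ {n | S n ω ≤ τ n ω} := by rw [hcon]; exact Set.notMem_empty n
      have hnm2 : ¬ S n ω ≤ τ n ω := hnm
      exact not_le.mp hnm2
    constructor
    · have h1 := Nat.sInf_mem hne
      rw [hM ω]
      exact h1
    · intro i hi
      rw [hM ω] at hi
      have hnm : i ∉ {n | S n ω ≤ τ n ω} := Nat.notMem_of_lt_sInf hi
      have hnm2 : ¬ S i ω ≤ τ i ω := hnm
      exact not_le.mp hnm2
  -- event decomposition
  set A : ℕ → Set Ω := fun n =>
    (⋂ i ∈ Finset.range n, {ω | τ i ω < S i ω}) ∩ {ω | S n ω ≤ τ n ω} with hA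
  have hAmeas : ∀ n, MeasurableSet (A n) := fun n =>
    (MeasurableSet.biInter (Finset.range n).countable_toSet
      (fun i _ => measurableSet_lt (hτmeas i) (hSmeas i))).inter
      (measurableSet_le (hSmeas n) (hτmeas n))
  have hEeq : {ω | c (M ω) ω = k}
      = (⋃ n, A n ∩ {ω | c n ω = k}) ∪ (N ∩ {ω | c 0 ω = k}) := by
    ext ω
    simp only [Set.mem_setOf_eq, Set.mem_union, Set.mem_iUnion, Set.mem_inter_iff]
    constructor
    · intro hck
      by_cases hω : ω ∈ N
      · right
        refine ⟨hω, ?_⟩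
        rw [← hMN ω hω]
        exact hck
      · left
        obtain ⟨h1, h2⟩ := hnotN ω hω
        refine ⟨M ω, ⟨?_, h1⟩, hck⟩
        exact Set.mem_iInter₂.mpr fun i hi => h2 i (Finset.mem_range.mp hi)
    · rintro (⟨n, ⟨hA1, hA2⟩, hcn⟩ | ⟨hN', hc0⟩)
      · have hMn : M ω = n :=
          hMchar ω n hA2 (fun i hi => Set.mem_iInter₂.mp hA1 i (Finset.mem_range.mpr hi))
        rw [hMn]
        exact hcn
      · rw [hMN ω hN']
        exact hc0
  have hEmeas : MeasurableSet {ω | c (M ω) ω = k} := by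
    rw [hEeq]
    exact (MeasurableSet.iUnion fun n => (hAmeas n).inter (hCkmeas n)).union
      (hNmeas.inter (hCkmeas 0))
  -- pointwise decomposition
  set h : ℕ → Ω → ℝ := fun n ω => (∏ i ∈ Finset.range n, Fa (T i ω)) * Fb (T n ω) with hh
  have hhmeas : ∀ n, Measurable (h n) := by
    intro n
    exact (Finset.measurable_prod (Finset.range n)
      (fun i _ => hFam.comp (hTmeas i))).mul (hFbm.comp (hTmeas n))
  have hhnn : ∀ n ω, 0 ≤ h n ω := fun n ω =>
    mul_nonneg (Finset.prod_nonneg fun i _ => hFann _) (hFbnn _)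
  have hpt : ∀ ω, ω ∉ N →
      Set.indicator {ω | c (M ω) ω = k} (fun ω => Real.exp (-s * B ω)) ω = ∑' n, h n ω := by
    intro ω hω
    obtain ⟨hmem, hmin⟩ := hnotN ω hω
    have hzero : ∀ n, n ≠ M ω → h n ω = 0 := by
      intro n hn
      rcases hn.lt_or_gt with hlt | hgt
      · have hτS : τ n ω < S n ω := hmin n hlt
        rw [hh]; dsimp only
        rw [hFb, hT]; dsimp only
        rw [if_neg (fun hcon => absurd hcon.1 (not_le.mpr hτS)), mul_zero]
      · rw [hh]; dsimp only
        rw [Finset.prod_eq_zero (Finset.mem_range.mpr hgt)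
          (show Fa (T (M ω) ω) = 0 by rw [hFa, hT]; exact if_neg (not_lt.mpr hmem)), zero_mul]
    have hsum : ∑' n, h n ω = h (M ω) ω := tsum_eq_single (M ω) hzero
    rw [hsum, Set.indicator_apply]
    simp only [Set.mem_setOf_eq]
    by_cases hc : c (M ω) ω = k
    · rw [if_pos hc]
      have hFbval : Fb (T (M ω) ω) = Real.exp (-s * S (M ω) ω) := by
        rw [hFb, hT]; exact if_pos ⟨hmem, hc⟩
      have hFaval : ∀ i, i < M ω → Fa (T i ω) = Real.exp (-s * τ i ω) := by
        intro i hi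
        rw [hFa, hT]; exact if_pos (hmin i hi)
      rw [hh]; dsimp only
      rw [hB ω]
      rw [show -s * ((∑ i ∈ Finset.range (M ω), τ i ω) + S (M ω) ω)
          = (∑ i ∈ Finset.range (M ω), -s * τ i ω) + (-s * S (M ω) ω) by
        rw [mul_add, Finset.mul_sum]]
      rw [Real.exp_add, Real.exp_sum]
      rw [hFbval]
      congr 1
      exact Finset.prod_congr rfl fun i hi => (hFaval i (Finset.mem_range.mp hi)).symm
    · rw [if_neg hc, hh]; dsimp only
      rw [hFb, hT]; dsimp only
      rw [if_neg (fun hcon => hc hcon.2), mul_zero]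
  have haeeq : Set.indicator {ω | c (M ω) ω = k} (fun ω => Real.exp (-s * B ω))
      =ᵐ[P] fun ω => ∑' n, h n ω := by
    refine (ae_iff.mpr ?_)
    refine measure_mono_null (fun ω hω => ?_) hPN
    simp only [Set.mem_setOf_eq] at hω
    by_contra hcon
    exact hω (hpt ω hcon)
  -- integrability of h n
  have hτpos : ∀ᵐ ω ∂P, ∀ n, 0 < τ n ω := by
    rw [ae_all_iff]
    intro n
    have h1 : P {ω | 0 < τ n ω} = 1 := by
      have h2 := hτexp n 0 le_rfl
      rw [mul_zero, Real.exp_zero] at h2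
      exact (ENNReal.toReal_eq_one_iff _).mp h2
    rw [ae_iff]
    have : {ω | ¬ 0 < τ n ω} = {ω | 0 < τ n ω}ᶜ := rfl
    rw [this]
    exact (prob_compl_eq_zero_iff (measurableSet_lt measurable_const (hτmeas n))).mpr h1
  have hInt : ∀ n, Integrable (h n) P := by
    intro n
    refine Integrable.mono' (integrable_const 1) (hhmeas n).aestronglyMeasurable ?_
    filter_upwards [hτpos] with ω hτω
    rw [Real.norm_eq_abs, abs_of_nonneg (hhnn n ω)]
    rw [hh]; dsimp only
    refine mul_le_one₀ ?_ (hFbnn _) (hFble1 n ω)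
    refine Finset.prod_le_one (fun i _ => hFann _) fun i _ => ?_
    rw [hFa, hT]; dsimp only
    split_ifs
    · exact Real.exp_le_one_iff.mpr (by nlinarith [hτω i])
    · exact zero_le_one
  have hIval : ∀ n, ∫ ω, h n ω ∂P = r ^ n * q := by
    intro n
    rw [hh]; dsimp only
    exact hprod n
  have hsum_lint : ∑' n, ∫⁻ ω, ‖h n ω‖₊ ∂P ≠ ⊤ := by
    have heach : ∀ n, ∫⁻ ω, ‖h n ω‖₊ ∂P = ENNReal.ofReal (r ^ n * q) := by
      intro n
      have h1 : ∫⁻ ω, ‖h n ω‖₊ ∂P = ∫⁻ ω, ENNReal.ofReal (h n ω) ∂P := by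
        apply lintegral_congr fun ω => ?_
        rw [← enorm_eq_nnnorm, Real.enorm_eq_ofReal (hhnn n ω)]
      rw [h1, ← ofReal_integral_eq_lintegral_ofReal (hInt n) (ae_of_all _ (hhnn n)), hIval n]
    have hcong : (∑' n, ∫⁻ ω, ‖h n ω‖₊ ∂P) = ∑' n, ENNReal.ofReal (r ^ n * q) :=
      tsum_congr heach
    rw [hcong]
    have hsumm : Summable (fun n => r ^ n * q) :=
      (summable_geometric_of_lt_one hr0 hr1).mul_right q
    rw [← ENNReal.ofReal_tsum_of_nonneg (fun n => by positivity) hsumm]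
    exact ENNReal.ofReal_ne_top
  -- final computation
  have hfinal : ∫ ω in {ω | c (M ω) ω = k}, Real.exp (-s * B ω) ∂P = (1 - r)⁻¹ * q := by
    rw [← integral_indicator hEmeas, integral_congr_ae haeeq,
      integral_tsum (fun n => (hhmeas n).aestronglyMeasurable) hsum_lint]
    rw [tsum_congr hIval, tsum_mul_right, tsum_geometric_of_lt_one hr0 hr1]
  have hLSbsum : LSb = l⁻¹ * ∑ j, lam j * LS j (s + l) := by
    have hptw : ∀ ω, Real.exp (-((s + l) * S 0 ω))
        = ∑ j : Fin K, (if c 0 ω = j then Real.exp (-((s + l) * S 0 ω)) else 0) := by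
      intro ω
      rw [Finset.sum_ite_eq Finset.univ (c 0 ω) (fun _ => Real.exp (-((s + l) * S 0 ω)))]
      simp
    have hintj : ∀ j : Fin K, Integrable
        (fun ω => if c 0 ω = j then Real.exp (-((s + l) * S 0 ω)) else 0) P := by
      intro j
      refine Integrable.mono' (integrable_const 1) ?_ (ae_of_all _ fun ω => ?_)
      · apply Measurable.aestronglyMeasurable
        apply Measurable.ite ((hcmeas 0) (measurableSet_singleton j))
        · exact ((hSmeas 0).const_mul (s+l)).neg.exp
        · exact measurable_const
      · rw [Real.norm_eq_abs]
        split_ifs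
        · rw [abs_of_nonneg (Real.exp_nonneg _)]
          exact Real.exp_le_one_iff.mpr (by nlinarith [hSnn 0 ω])
        · simp
    have h1 : LSb = ∑ j : Fin K,
        ∫ ω, (if c 0 ω = j then Real.exp (-((s + l) * S 0 ω)) else 0) ∂P := by
      rw [hLSbdef]
      rw [show (fun ω => Real.exp (-((s + l) * S 0 ω)))
          = fun ω => ∑ j : Fin K, (if c 0 ω = j then Real.exp (-((s + l) * S 0 ω)) else 0)
        from funext hptw]
      exact integral_finset_sum _ (fun j _ => hintj j)
    have h2 : ∀ j : Fin K, ∫ ω, (if c 0 ω = j then Real.exp (-((s + l) * S 0 ω)) else 0) ∂P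
        = (lam j / l) * LS j (s + l) := by
      intro j
      have e2 : ∫ ω in {ω | c 0 ω = j}, Real.exp (-((s + l) * S 0 ω)) ∂P
          = (lam j / l) * LS j (s + l) := by
        have h3 := hLS 0 j (s + l)
        simp only [neg_mul] at h3
        exact h3
      have hmj : MeasurableSet {ω | c 0 ω = j} := (hcmeas 0) (measurableSet_singleton j)
      rw [← e2, ← integral_indicator hmj]
      congr 1
      funext ω
      rw [Set.indicator_apply]
      simp only [Set.mem_setOf_eq]
    rw [h1, Finset.sum_congr rfl (fun j _ => h2 j), Finset.mul_sum]
    exact Finset.sum_congr rfl fun j _ => by ring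
  rw [hfinal, ← hLSbsum, ← hqval, hrval]
  have h1r : (0:ℝ) < 1 - l / (s + l) * (1 - LSb) := by
    rw [← hrval]; linarith
  have hden : (0:ℝ) < s + l * LSb := by nlinarith
  field_simp
  rw [show s + l - l * (1 - LSb) = s + l * LSb by ring, div_self hden.ne']
end
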